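/- arXiv:2103.14809 — 7 statements merged into one kernel-verified Lean document; each statement's English description precedes it below -/
import Mathlib

section
/- Let R be a φ-ring. Then R is nonnil-coherent if and only if for every finitely generated ideal I of R and every non-nilpotent element b ∈ R, the colon ideal (I :_R b) = {x ∈ R : xb ∈ I} is a finitely generated ideal of R. -/
open CategoryTheory

universe u

/-- A commutative ring is a `φ`-ring if its nilradical is a divided prime ideal. -/
def IsPhiRing (R : Type u) [CommRing R] : Prop :=
  (nilradical R).IsPrime ∧ ∀ x : R, x ∉ nilradical R → nilradical R ≤ Ideal.span {x}

/-- A ring is nonnil-coherent if every finitely generated nonnil ideal is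
finitely presented as a module. -/
def IsNonnilCoherent (R : Type u) [CommRing R] : Prop :=
  ∀ I : Ideal R, I.FG → ¬ I ≤ nilradical R → Module.FinitePresentation R I

/-- A module is φ-torsion if every element is annihilated by a nonnil ideal. -/
def IsPhiTorsion (R : Type u) [CommRing R] (T : Type u) [AddCommGroup T] [Module R T] : Prop :=
  ∀ t : T, ∃ I : Ideal R, ¬ I ≤ nilradical R ∧ ∀ a ∈ I, a • t = 0

/-- A module `M` is φ-flat if `Tor₁ᴿ(T, M) = 0` for every φ-torsion module `T`. -/
def IsPhiFlat (R : Type u) [CommRing R] (M : Type u) [AddCommGroup M] [Module R M] : Prop :=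
  ∀ (T : Type u) [AddCommGroup T] [Module R T], IsPhiTorsion R T →
    Subsingleton (((Tor (ModuleCat.{u} R) 1).obj (ModuleCat.of R T)).obj (ModuleCat.of R M))

/-- A module `M` is nonnil-injective if `Ext¹ᴿ(T, M) = 0` for every φ-torsion module `T`. -/
def IsNonnilInjective (R : Type u) [CommRing R] (M : Type u) [AddCommGroup M] [Module R M] :
    Prop :=
  ∀ (T : Type u) [AddCommGroup T] [Module R T], IsPhiTorsion R T →
    Subsingleton (((Ext R (ModuleCat.{u} R) 1).obj (Opposite.op (ModuleCat.of R T))).obj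
      (ModuleCat.of R M))

/-- A module `M` is nonnil-FP-injective if `Ext¹ᴿ(T, M) = 0` for every finitely
presented φ-torsion module `T`. -/
def IsNonnilFPInjective (R : Type u) [CommRing R] (M : Type u) [AddCommGroup M] [Module R M] :
    Prop :=
  ∀ (T : Type u) [AddCommGroup T] [Module R T], Module.FinitePresentation R T →
    IsPhiTorsion R T →
    Subsingleton (((Ext R (ModuleCat.{u} R) 1).obj (Opposite.op (ModuleCat.of R T))).obj
      (ModuleCat.of R M))

section Aux

variable {R : Type u} [CommRing R]

private lemma memJ (I : Ideal R) (b : R) : b ∈ I ⊔ Ideal.span {b} :=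
  le_sup_right (α := Ideal R) (Ideal.mem_span_singleton_self b)

/-- The canonical map `R → (I ⊔ (b)) / I`. -/
noncomputable def auxMap (I : Ideal R) (b : R) :
    R →ₗ[R] ((I ⊔ Ideal.span {b} : Ideal R) ⧸
      Submodule.comap (I ⊔ Ideal.span {b} : Ideal R).subtype I) :=
  (Submodule.comap (I ⊔ Ideal.span {b} : Ideal R).subtype I).mkQ.comp
    (LinearMap.toSpanSingleton R _ ⟨b, memJ I b⟩)

lemma auxMap_surjective (I : Ideal R) (b : R) : Function.Surjective (auxMap I b) := by
  intro q
  obtain ⟨j, rfl⟩ := Submodule.mkQ_surjective _ q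
  obtain ⟨y, hy, z, hz, hyz⟩ := Submodule.mem_sup.mp j.2
  obtain ⟨r, rfl⟩ := Ideal.mem_span_singleton'.mp hz
  refine ⟨r, ?_⟩
  show Submodule.mkQ _ (r • ⟨b, memJ I b⟩) = Submodule.mkQ _ j
  rw [Submodule.mkQ_apply, Submodule.mkQ_apply, Submodule.Quotient.eq]
  have h2 : r * b - (j : R) = -y := by rw [← hyz]; ring
  simpa [Submodule.mem_comap, h2] using I.neg_mem hy

lemma auxMap_ker (I : Ideal R) (b : R) :
    LinearMap.ker (auxMap I b) = Submodule.colon I (Ideal.span {b}) := by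
  ext x
  simp only [auxMap, LinearMap.mem_ker, LinearMap.comp_apply, Submodule.mkQ_apply,
    Submodule.Quotient.mk_eq_zero, Submodule.mem_comap, Ideal.mem_colon_span_singleton]
  show (((x • (⟨b, memJ I b⟩ : (I ⊔ Ideal.span {b} : Ideal R))) : _) : R) ∈ I ↔ _
  simp [smul_eq_mul]

lemma aux_fp (I : Ideal R) (b : R) (hI : Module.FinitePresentation R I)
    (hc : (Submodule.colon I (Ideal.span {b})).FG) :
    Module.FinitePresentation R (I ⊔ Ideal.span {b} : Ideal R) := by
  have hIJ : I ≤ I ⊔ Ideal.span {b} := le_sup_left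
  have e := Submodule.comapSubtypeEquivOfLe hIJ
  have fpI' : Module.FinitePresentation R
      (Submodule.comap (I ⊔ Ideal.span {b} : Ideal R).subtype I) := by
    have := hI
    exact Module.finitePresentation_of_surjective e.symm.toLinearMap e.symm.surjective
      (by rw [LinearMap.ker_eq_bot.mpr e.symm.injective]; exact Submodule.fg_bot)
  have fpQ : Module.FinitePresentation R
      ((I ⊔ Ideal.span {b} : Ideal R) ⧸
        Submodule.comap (I ⊔ Ideal.span {b} : Ideal R).subtype I) :=
    Module.finitePresentation_of_surjective (auxMap I b) (auxMap_surjective I b)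
      (by rw [auxMap_ker]; exact hc)
  have hker : Module.FinitePresentation R
      (LinearMap.ker (Submodule.comap (I ⊔ Ideal.span {b} : Ideal R).subtype I).mkQ) := by
    rw [Submodule.ker_mkQ]; exact fpI'
  exact Module.finitePresentation_of_ker
    (Submodule.comap (I ⊔ Ideal.span {b} : Ideal R).subtype I).mkQ (Submodule.mkQ_surjective _)

lemma span_fp {R : Type u} [CommRing R]
    (h : ∀ (I : Ideal R) (b : R), I.FG → b ∉ nilradical R →
      (Submodule.colon I (Ideal.span {b})).FG) :
    ∀ t : Finset R, (∀ x ∈ t, x ∉ nilradical R) → t.Nonempty →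
      Module.FinitePresentation R (Ideal.span (t : Set R)) := by
  classical
  intro t
  induction t using Finset.induction_on with
  | empty => intro _ hne; simp at hne
  | @insert a s ha ih =>
    intro htn _
    by_cases hs : s.Nonempty
    · have fpI := ih (fun x hx => htn x (Finset.mem_insert_of_mem hx)) hs
      have hcol := h _ a ⟨s, rfl⟩ (htn a (Finset.mem_insert_self a s))
      have := aux_fp (Ideal.span (s : Set R)) a fpI hcol
      have heq : Ideal.span ((insert a s : Finset R) : Set R) =
          Ideal.span (s : Set R) ⊔ Ideal.span {a} := by
        rw [Finset.coe_insert, Ideal.span_insert, sup_comm]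
      rw [heq]; exact this
    · rw [Finset.not_nonempty_iff_eq_empty] at hs; subst hs
      have h0 : Module.FinitePresentation R (⊥ : Ideal R) := by
        refine Module.finitePresentation_of_surjective (0 : R →ₗ[R] (⊥ : Ideal R))
          (fun x => ⟨0, Subsingleton.elim _ _⟩) ?_
        rw [LinearMap.ker_zero]
        exact Module.Finite.fg_top
      have hcol := h ⊥ a ⟨∅, by simp⟩ (htn a (Finset.mem_insert_self a ∅))
      have := aux_fp (⊥ : Ideal R) a h0 hcol
      have heq : Ideal.span ((insert a (∅ : Finset R) : Finset R) : Set R) =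
          (⊥ : Ideal R) ⊔ Ideal.span {a} := by simp
      rw [heq]; exact this

end Aux

/-- A φ-ring `R` is nonnil-coherent if and only if for every finitely
generated ideal `I` of `R` and every non-nilpotent `b ∈ R`, the colon ideal `(I :_R b)`
is finitely generated. -/
theorem nonnilCoherent_iff_colon_fg (R : Type u) [CommRing R] (hR : IsPhiRing R) :
    IsNonnilCoherent R ↔
      ∀ (I : Ideal R) (b : R), I.FG → b ∉ nilradical R →
        (Submodule.colon I (Ideal.span {b})).FG := by
  constructor
  · intro h I b hfg hb
    have hJfg : (I ⊔ Ideal.span {b}).FG := Submodule.FG.sup hfg ⟨{b}, by simp⟩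
    have hJnn : ¬ (I ⊔ Ideal.span {b}) ≤ nilradical R := fun hle => hb (hle (memJ I b))
    have fpJ := h _ hJfg hJnn
    have fgI' : (Submodule.comap (I ⊔ Ideal.span {b} : Ideal R).subtype I).FG := by
      apply Submodule.fg_of_fg_map_injective _ (Submodule.injective_subtype _)
      rw [Submodule.map_comap_subtype, inf_eq_right.mpr (le_sup_left : I ≤ I ⊔ Ideal.span {b})]
      exact hfg
    have fpQ : Module.FinitePresentation R
        ((I ⊔ Ideal.span {b} : Ideal R) ⧸
          Submodule.comap (I ⊔ Ideal.span {b} : Ideal R).subtype I) := by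
      have := fpJ
      exact Module.finitePresentation_of_surjective _ (Submodule.mkQ_surjective _)
        (by rw [Submodule.ker_mkQ]; exact fgI')
    have hker := Module.FinitePresentation.fg_ker (auxMap I b) (auxMap_surjective I b)
    rwa [auxMap_ker] at hker
  · intro h I hfg hnn
    obtain ⟨s, rfl⟩ := hfg
    classical
    set t := s.filter (fun x => x ∉ nilradical R) with ht
    have htn : ∀ x ∈ t, x ∉ nilradical R := fun x hx => (Finset.mem_filter.mp hx).2
    have hex : ∃ b ∈ s, b ∉ nilradical R := by
      by_contra hc
      push_neg at hc
      exact hnn (Ideal.span_le.mpr fun x hx => hc x hx)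
    obtain ⟨b, hbs, hbn⟩ := hex
    have hbt : b ∈ t := Finset.mem_filter.mpr ⟨hbs, hbn⟩
    have hspan : Ideal.span (t : Set R) = Ideal.span (s : Set R) := by
      refine le_antisymm (Ideal.span_mono fun x hx => (Finset.mem_filter.mp hx).1) ?_
      rw [Ideal.span_le]
      intro x hx
      by_cases hxn : x ∈ nilradical R
      · exact (le_trans (hR.2 b hbn)
          (Ideal.span_mono (Set.singleton_subset_iff.mpr hbt))) hxn
      · exact Ideal.subset_span (Finset.mem_filter.mpr ⟨hx, hxn⟩)
    rw [← hspan]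
    exact span_fp h t htn ⟨b, hbt⟩
end

section
/- Let R be a φ-ring. Then R is nonnil-coherent if and only if R/Nil(R) is a coherent integral domain and the annihilator ideal (0 :_R r) is finitely generated for every non-nilpotent element r ∈ R. -/
open CategoryTheory

universe u

/-- A ring is coherent if every finitely generated ideal is finitely presented. -/
def IsCoherentRing (S : Type u) [CommRing S] : Prop :=
  ∀ I : Ideal S, I.FG → Module.FinitePresentation S I


section Helpers
variable {S : Type u} [CommRing S]

lemma fp_of_ker_fg {n : ℕ} (x : Fin n → S) (I : Ideal S)
    (hx : Submodule.span S (Set.range x) = I)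
    (hk : (LinearMap.ker (Fintype.linearCombination S x)).FG) :
    Module.FinitePresentation S I := by
  have hmem : ∀ c, Fintype.linearCombination S x c ∈ I := by
    intro c
    have : Fintype.linearCombination S x c ∈ LinearMap.range (Fintype.linearCombination S x) :=
      LinearMap.mem_range_self _ c
    rwa [Fintype.range_linearCombination, hx] at this
  let f : (Fin n → S) →ₗ[S] I := (Fintype.linearCombination S x).codRestrict I hmem
  have hsurj : Function.Surjective f := by
    rintro ⟨y, hy⟩
    rw [← hx] at hy
    obtain ⟨c, hc⟩ := (Submodule.mem_span_range_iff_exists_fun S).mp hy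
    exact ⟨c, Subtype.ext (by simpa [f, Fintype.linearCombination_apply] using hc)⟩
  refine Module.finitePresentation_of_surjective f hsurj ?_
  rwa [LinearMap.ker_codRestrict]

lemma ker_fg_of_fp {n : ℕ} (x : Fin n → S) (I : Ideal S)
    (hx : Submodule.span S (Set.range x) = I)
    (hfp : Module.FinitePresentation S I) :
    (LinearMap.ker (Fintype.linearCombination S x)).FG := by
  have hmem : ∀ c, Fintype.linearCombination S x c ∈ I := by
    intro c
    have : Fintype.linearCombination S x c ∈ LinearMap.range (Fintype.linearCombination S x) :=
      LinearMap.mem_range_self _ c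
    rwa [Fintype.range_linearCombination, hx] at this
  let f : (Fin n → S) →ₗ[S] I := (Fintype.linearCombination S x).codRestrict I hmem
  have hsurj : Function.Surjective f := by
    rintro ⟨y, hy⟩
    rw [← hx] at hy
    obtain ⟨c, hc⟩ := (Submodule.mem_span_range_iff_exists_fun S).mp hy
    exact ⟨c, Subtype.ext (by simpa [f, Fintype.linearCombination_apply] using hc)⟩
  haveI := hfp
  have := Module.FinitePresentation.fg_ker f hsurj
  rwa [LinearMap.ker_codRestrict] at this

/-- the `snoc`-with-0 linear map -/
noncomputable def snocMap (S : Type u) [CommRing S] (n : ℕ) :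
    (Fin n → S) →ₗ[S] (Fin (n+1) → S) where
  toFun a := Fin.snoc a 0
  map_add' a b := by
    funext i
    refine Fin.lastCases ?_ (fun j => ?_) i <;> simp
  map_smul' r a := by
    funext i
    refine Fin.lastCases ?_ (fun j => ?_) i <;> simp

end Helpers


lemma colon_fg {R : Type u} [CommRing R] (hR : IsPhiRing R)
    (hcoh : IsCoherentRing (R ⧸ nilradical R))
    (J : Ideal R) (hJfg : J.FG) (hJ : ¬ J ≤ nilradical R) (x : R) :
    (J.colon (Ideal.span {x})).FG := by
  obtain ⟨t, htJ, htN⟩ := SetLike.not_le_iff_exists.mp hJ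
  have hNt : nilradical R ≤ Ideal.span {t} := hR.2 t htN
  have hNJ : nilradical R ≤ J := hNt.trans ((Ideal.span_singleton_le_iff_mem J).mpr htJ)
  by_cases hx : x ∈ nilradical R
  · have h1 : J.colon (Ideal.span {x}) = ⊤ := by
      rw [eq_top_iff]
      intro a _
      rw [Ideal.mem_colon_span_singleton]
      exact hNJ (Ideal.mul_mem_left _ a hx)
    rw [h1]
    exact ⟨{1}, by simp⟩
  · obtain ⟨m, y, hy⟩ := Submodule.fg_iff_exists_fin_generating_family.mp hJfg
    set π := Ideal.Quotient.mk (nilradical R) with hπ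
    set z : Fin (m+1) → R := Fin.snoc y x with hz
    set Q : Ideal (R ⧸ nilradical R) := Submodule.span _ (Set.range (fun i => π (z i))) with hQ
    have hQfg : Q.FG := Submodule.fg_span (Set.finite_range _)
    have hT : (LinearMap.ker (Fintype.linearCombination (R ⧸ nilradical R) (fun i => π (z i)))).FG :=
      ker_fg_of_fp (fun i => π (z i)) Q rfl (hcoh Q hQfg)
    have hA : (Submodule.map (LinearMap.proj (Fin.last m))
        (LinearMap.ker (Fintype.linearCombination (R ⧸ nilradical R) (fun i => π (z i))))).FG := hT.map _
    obtain ⟨q, b, hb⟩ := Submodule.fg_iff_exists_fin_generating_family.mp hA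
    choose g hg using fun j => Ideal.Quotient.mk_surjective (b j)
    have key : J.colon (Ideal.span {x}) = Ideal.span (Set.range g ∪ {t}) := by
      apply le_antisymm
      · intro a ha
        rw [Ideal.mem_colon_span_singleton] at ha
        rw [← hy] at ha
        obtain ⟨c, hc⟩ := (Submodule.mem_span_range_iff_exists_fun R).mp ha
        -- build a kernel element
        set V0 : Fin (m+1) → R := Fin.snoc (fun k : Fin m => -(c k)) a with hV0
        set V : Fin (m+1) → (R ⧸ nilradical R) := fun i => π (V0 i) with hV
        have hVker : V ∈ LinearMap.ker (Fintype.linearCombination (R ⧸ nilradical R) (fun i => π (z i))) := by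
          rw [LinearMap.mem_ker, Fintype.linearCombination_apply]
          have h1 : ∑ i, V i • π (z i) = π (∑ i, V0 i * z i) := by
            rw [map_sum]
            exact Finset.sum_congr rfl fun i _ => by rw [smul_eq_mul, hV, ← map_mul]
          rw [h1]
          have h2 : (∑ i, V0 i * z i) = 0 := by
            rw [Fin.sum_univ_castSucc]
            simp only [hV0, hz, Fin.snoc_castSucc, Fin.snoc_last]
            rw [show ∑ i : Fin m, -c i * y i = -∑ i : Fin m, c i • y i by
              simp [smul_eq_mul, Finset.sum_neg_distrib]]
            rw [hc]
            ring
          rw [h2, map_zero]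
        have hπa : π a ∈ Submodule.span (R ⧸ nilradical R) (Set.range b) := by
          rw [hb]
          refine ⟨V, hVker, ?_⟩
          simp [hV, hV0, Fin.snoc_last]
        obtain ⟨d, hd⟩ := (Submodule.mem_span_range_iff_exists_fun (R ⧸ nilradical R)).mp hπa
        choose e he using fun j => Ideal.Quotient.mk_surjective (d j)
        have hdiff : a - ∑ j, e j * g j ∈ nilradical R := by
          rw [← Ideal.Quotient.eq_zero_iff_mem]
          rw [map_sub, map_sum]
          have : ∑ j, π (e j * g j) = π a := by
            rw [← hd]
            exact Finset.sum_congr rfl fun j _ => by rw [map_mul, he, hg, smul_eq_mul]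
          rw [this, sub_self]
        have h3 : a - ∑ j, e j * g j ∈ Ideal.span (Set.range g ∪ {t}) := by
          refine Ideal.span_mono (Set.subset_union_right) ?_
          exact (hNt.trans (Ideal.span_mono (by simp))) hdiff
        have h4 : ∑ j, e j * g j ∈ Ideal.span (Set.range g ∪ {t}) := by
          refine Submodule.sum_mem _ fun j _ => Ideal.mul_mem_left _ _ ?_
          exact Ideal.subset_span (Set.mem_union_left _ ⟨j, rfl⟩)
        have := Submodule.add_mem _ h3 h4
        simpa using this
      · rw [Ideal.span_le]
        rintro s (⟨j, rfl⟩ | hs)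
        · -- s = g j
          rw [SetLike.mem_coe, Ideal.mem_colon_span_singleton]
          have hbj : b j ∈ Submodule.map (LinearMap.proj (Fin.last m))
              (LinearMap.ker (Fintype.linearCombination (R ⧸ nilradical R) (fun i => π (z i)))) := by
            rw [← hb]; exact Submodule.subset_span ⟨j, rfl⟩
          obtain ⟨V, hVker, hVl⟩ := hbj
          choose W hW using fun i => Ideal.Quotient.mk_surjective (V i)
          set W' : Fin (m+1) → R := Fin.snoc (fun i : Fin m => W i.castSucc) (g j) with hW'
          have hW'' : ∀ i, π (W' i) = V i := by
            intro i
            refine Fin.lastCases ?_ (fun k => ?_) i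
            · rw [hW']; simp only [Fin.snoc_last]
              rw [hg, ← hVl]; rfl
            · rw [hW']; simp only [Fin.snoc_castSucc]; exact hW _
          have hsum : (∑ i, W' i * z i) ∈ nilradical R := by
            rw [← Ideal.Quotient.eq_zero_iff_mem, map_sum]
            have : ∑ i, π (W' i * z i) = ∑ i, V i • π (z i) := by
              refine Finset.sum_congr rfl fun i _ => ?_
              rw [map_mul, hW'', smul_eq_mul]
            rw [this]
            exact hVker
          have hsum2 : (∑ i, W' i * z i) = (∑ i : Fin m, W i.castSucc * y i) + g j * x := by
            rw [Fin.sum_univ_castSucc]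
            simp [hW', hz]
          have : g j * x = (∑ i, W' i * z i) - ∑ i : Fin m, W i.castSucc * y i := by
            rw [hsum2]; ring
          rw [this]
          refine Submodule.sub_mem _ (hNJ hsum) ?_
          refine Submodule.sum_mem _ fun i _ => Ideal.mul_mem_left _ _ ?_
          rw [← hy]; exact Submodule.subset_span ⟨i, rfl⟩
        · rcases hs with rfl
          rw [SetLike.mem_coe, Ideal.mem_colon_span_singleton]
          exact Ideal.mul_mem_right _ _ htJ
    rw [key]
    exact Submodule.fg_span ((Set.finite_range g).union (Set.finite_singleton t))

lemma ker_lc_fg {R : Type u} [CommRing R] (hR : IsPhiRing R)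
    (hcoh : IsCoherentRing (R ⧸ nilradical R))
    (hann : ∀ r : R, r ∉ nilradical R → (Submodule.colon (⊥ : Ideal R) (Ideal.span {r})).FG) :
    ∀ (n : ℕ) (x : Fin n → R), ¬ (Submodule.span R (Set.range x) ≤ nilradical R) →
      (LinearMap.ker (Fintype.linearCombination R x)).FG := by
  intro n
  induction n with
  | zero =>
    intro x hx
    rw [Set.range_eq_empty, Submodule.span_empty] at hx
    exact absurd bot_le hx
  | succ n ih =>
    intro x hx
    set x' : Fin n → R := x ∘ Fin.castSucc with hx'
    set xl : R := x (Fin.last n) with hxl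
    by_cases hJ' : Submodule.span R (Set.range x') ≤ nilradical R
    · -- nilpotent prefix case
      have hxlN : xl ∉ nilradical R := by
        intro h
        apply hx
        rw [Submodule.span_le]
        rintro _ ⟨i, rfl⟩
        refine Fin.lastCases ?_ (fun j => ?_) i
        · exact h
        · exact hJ' (Submodule.subset_span ⟨j, rfl⟩)
      have hc : ∀ i : Fin n, ∃ c, c * xl = x' i := fun i =>
        Ideal.mem_span_singleton'.mp (hR.2 xl hxlN (hJ' (Submodule.subset_span ⟨i, rfl⟩)))
      choose c hcc using hc
      obtain ⟨p, d, hd⟩ := Submodule.fg_iff_exists_fin_generating_family.mp (hann xl hxlN)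
      set G1 : Fin n → (Fin (n+1) → R) := fun j => Fin.snoc (Pi.single j 1) (-(c j)) with hG1
      set G2 : Fin p → (Fin (n+1) → R) := fun j => Fin.snoc 0 (d j) with hG2
      have hdxl : ∀ j, d j * xl = 0 := by
        intro j
        have : d j ∈ Submodule.colon (⊥ : Ideal R) (Ideal.span {xl}) := by
          rw [← hd]; exact Submodule.subset_span ⟨j, rfl⟩
        simpa using Ideal.mem_colon_span_singleton.mp this
      have key : LinearMap.ker (Fintype.linearCombination R x)
          = Submodule.span R (Set.range G1 ∪ Set.range G2) := by
        apply le_antisymm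
        · intro a ha
          rw [LinearMap.mem_ker, Fintype.linearCombination_apply] at ha
          rw [Fin.sum_univ_castSucc] at ha
          set e : R := (∑ i, a i.castSucc * c i) + a (Fin.last n) with he
          have hexl : e * xl = 0 := by
            rw [he, add_mul, Finset.sum_mul]
            have : ∑ i : Fin n, a i.castSucc * c i * xl = ∑ i : Fin n, a i.castSucc • x i.castSucc := by
              refine Finset.sum_congr rfl fun i _ => ?_
              rw [mul_assoc, hcc]
              rfl
            rw [this, ← ha]
            push_cast [smul_eq_mul]
            ring
          have heC : e ∈ Submodule.colon (⊥ : Ideal R) (Ideal.span {xl}) := by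
            rw [Ideal.mem_colon_span_singleton, hexl]
            exact Submodule.zero_mem _
          rw [← hd] at heC
          obtain ⟨r, hr⟩ := (Submodule.mem_span_range_iff_exists_fun R).mp heC
          have hsplit : a = (∑ i, a i.castSucc • G1 i) + (∑ j, r j • G2 j) := by
            funext k
            refine Fin.lastCases ?_ (fun ko => ?_) k
            · simp only [Pi.add_apply, Finset.sum_apply, Pi.smul_apply, hG1, hG2,
                Fin.snoc_last, smul_eq_mul]
              have h1 : ∑ j, r j * d j = e := by
                rw [← hr]; rfl
              rw [h1, he]
              simp only [mul_neg, Finset.sum_neg_distrib]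
              abel
            · simp only [Pi.add_apply, Finset.sum_apply, Pi.smul_apply, hG1, hG2,
                Fin.snoc_castSucc, smul_eq_mul, Pi.zero_apply, mul_zero,
                Finset.sum_const_zero, add_zero]
              simp [Pi.single_apply]
          rw [hsplit]
          refine Submodule.add_mem _ ?_ ?_
          · refine Submodule.sum_mem _ fun i _ => Submodule.smul_mem _ _ ?_
            exact Submodule.subset_span (Set.mem_union_left _ ⟨i, rfl⟩)
          · refine Submodule.sum_mem _ fun j _ => Submodule.smul_mem _ _ ?_
            exact Submodule.subset_span (Set.mem_union_right _ ⟨j, rfl⟩)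
        · rw [Submodule.span_le]
          rintro v (⟨j, rfl⟩ | ⟨j, rfl⟩)
          · rw [SetLike.mem_coe, LinearMap.mem_ker, Fintype.linearCombination_apply,
              Fin.sum_univ_castSucc]
            simp only [hG1, Fin.snoc_castSucc, Fin.snoc_last, smul_eq_mul]
            have h1 : ∑ i : Fin n, (Pi.single j (1:R) : Fin n → R) i * x i.castSucc = x' j := by
              simp [Pi.single_apply]
              rfl
            rw [h1, ← hcc j]
            ring
          · rw [SetLike.mem_coe, LinearMap.mem_ker, Fintype.linearCombination_apply,
              Fin.sum_univ_castSucc]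
            simp only [hG2, Fin.snoc_castSucc, Fin.snoc_last, smul_eq_mul, Pi.zero_apply,
              zero_mul, Finset.sum_const_zero, zero_add]
            exact hdxl j
      rw [key]
      exact Submodule.fg_span ((Set.finite_range G1).union (Set.finite_range G2))
    · -- nonnil prefix case
      apply Submodule.fg_of_fg_map_of_fg_inf_ker
        (LinearMap.proj (R := R) (φ := fun _ : Fin (n+1) => R) (Fin.last n))
      · have hmap : Submodule.map (LinearMap.proj (R := R) (φ := fun _ : Fin (n+1) => R) (Fin.last n))
            (LinearMap.ker (Fintype.linearCombination R x))
            = (Submodule.span R (Set.range x')).colon (Ideal.span {xl}) := by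
          apply le_antisymm
          · rintro _ ⟨v, hv, rfl⟩
            rw [SetLike.mem_coe, LinearMap.mem_ker, Fintype.linearCombination_apply,
              Fin.sum_univ_castSucc] at hv
            rw [Ideal.mem_colon_span_singleton]
            have : (LinearMap.proj (R := R) (φ := fun _ : Fin (n+1) => R) (Fin.last n)) v * xl
                = -∑ i : Fin n, v i.castSucc • x' i := by
              have := hv
              simp only [smul_eq_mul] at this ⊢
              have h2 : (v (Fin.last n)) * xl = -∑ i : Fin n, v i.castSucc * x i.castSucc := by
                rw [eq_neg_iff_add_eq_zero, add_comm]
                exact this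
              exact h2
            rw [this]
            refine Submodule.neg_mem _ (Submodule.sum_mem _ fun i _ => ?_)
            exact Submodule.smul_mem _ _ (Submodule.subset_span ⟨i, rfl⟩)
          · intro a ha
            rw [Ideal.mem_colon_span_singleton] at ha
            obtain ⟨cc, hcc2⟩ := (Submodule.mem_span_range_iff_exists_fun R).mp ha
            refine ⟨Fin.snoc (fun i : Fin n => -(cc i)) a, ?_, by simp [Fin.snoc_last]⟩
            rw [SetLike.mem_coe, LinearMap.mem_ker, Fintype.linearCombination_apply,
              Fin.sum_univ_castSucc]
            simp only [Fin.snoc_castSucc, Fin.snoc_last, smul_eq_mul]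
            rw [show ∑ i : Fin n, -cc i * x i.castSucc = -∑ i : Fin n, cc i • x' i by
              simp [smul_eq_mul, Finset.sum_neg_distrib]; rfl]
            rw [hcc2]
            ring
        rw [hmap]
        exact colon_fg hR hcoh _ (Submodule.fg_span (Set.finite_range x')) hJ' xl
      · have hinf : LinearMap.ker (Fintype.linearCombination R x)
            ⊓ LinearMap.ker (LinearMap.proj (R := R) (φ := fun _ : Fin (n+1) => R) (Fin.last n))
            = Submodule.map (snocMap R n) (LinearMap.ker (Fintype.linearCombination R x')) := by
          apply le_antisymm
          · rintro v ⟨hv1, hv2⟩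
            rw [SetLike.mem_coe, LinearMap.mem_ker] at hv1
            rw [SetLike.mem_coe, LinearMap.mem_ker] at hv2
            refine ⟨v ∘ Fin.castSucc, ?_, ?_⟩
            · rw [SetLike.mem_coe, LinearMap.mem_ker, Fintype.linearCombination_apply]
              rw [Fintype.linearCombination_apply, Fin.sum_univ_castSucc] at hv1
              have hlast : v (Fin.last n) = 0 := hv2
              rw [hlast, zero_smul, add_zero] at hv1
              exact hv1
            · show (Fin.snoc (v ∘ Fin.castSucc) 0 : Fin (n+1) → R) = v
              funext k
              refine Fin.lastCases ?_ (fun ko => ?_) k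
              · rw [Fin.snoc_last]; exact hv2.symm
              · rw [Fin.snoc_castSucc]; rfl
          · rintro _ ⟨a, ha, rfl⟩
            rw [SetLike.mem_coe, LinearMap.mem_ker, Fintype.linearCombination_apply] at ha
            rw [Submodule.mem_inf]
            constructor
            · show _ ∈ LinearMap.ker _
              rw [LinearMap.mem_ker, Fintype.linearCombination_apply, Fin.sum_univ_castSucc]
              show (∑ i : Fin n, (Fin.snoc a 0 : Fin (n+1) → R) i.castSucc • x i.castSucc)
                + (Fin.snoc a 0 : Fin (n+1) → R) (Fin.last n) • xl = 0
              simp only [Fin.snoc_castSucc, Fin.snoc_last, zero_smul, add_zero]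
              exact ha
            · show _ ∈ LinearMap.ker _
              rw [LinearMap.mem_ker]
              show (Fin.snoc a 0 : Fin (n+1) → R) (Fin.last n) = 0
              rw [Fin.snoc_last]
        rw [hinf]
        exact (ih x' hJ').map _


lemma ann_fg_of_nonnilCoherent {R : Type u} [CommRing R]
    (h : IsNonnilCoherent R) (r : R) (hr : r ∉ nilradical R) :
    (Submodule.colon (⊥ : Ideal R) (Ideal.span {r})).FG := by
  have hnn : ¬ Ideal.span {r} ≤ nilradical R := fun hle =>
    hr (hle (Ideal.mem_span_singleton_self r))
  have hfp := h _ (Submodule.fg_span_singleton r) hnn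
  have hker := ker_fg_of_fp (fun _ : Fin 1 => r) (Ideal.span {r})
    (by rw [Set.range_const, Ideal.span]) hfp
  have key : Submodule.colon (⊥ : Ideal R) (Ideal.span {r})
      = Submodule.map (LinearMap.proj (R := R) (φ := fun _ : Fin 1 => R) 0)
        (LinearMap.ker (Fintype.linearCombination R (fun _ : Fin 1 => r))) := by
    apply le_antisymm
    · intro a ha
      rw [Ideal.mem_colon_span_singleton, Submodule.mem_bot] at ha
      refine ⟨fun _ => a, ?_, rfl⟩
      rw [SetLike.mem_coe, LinearMap.mem_ker, Fintype.linearCombination_apply,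
        Fin.sum_univ_one, smul_eq_mul, ha]
    · rintro _ ⟨v, hv, rfl⟩
      rw [SetLike.mem_coe, LinearMap.mem_ker, Fintype.linearCombination_apply,
        Fin.sum_univ_one, smul_eq_mul] at hv
      rw [Ideal.mem_colon_span_singleton, Submodule.mem_bot]
      exact hv
  rw [key]
  exact hker.map _

lemma quotient_coherent {R : Type u} [CommRing R] (hR : IsPhiRing R)
    (h : IsNonnilCoherent R) : IsCoherentRing (R ⧸ nilradical R) := by
  intro I hIfg
  obtain ⟨n, s, hs⟩ := Submodule.fg_iff_exists_fin_generating_family.mp hIfg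
  set π := Ideal.Quotient.mk (nilradical R) with hπ
  choose y hy using fun i => Ideal.Quotient.mk_surjective (s i)
  by_cases hcase : ∀ i, y i ∈ nilradical R
  · -- I = ⊥
    have hI : I = ⊥ := by
      rw [← hs, eq_bot_iff, Submodule.span_le]
      rintro _ ⟨i, rfl⟩
      rw [SetLike.mem_coe, ← hy i, Submodule.mem_bot, Ideal.Quotient.eq_zero_iff_mem]
      exact hcase i
    refine fp_of_ker_fg (fun _ : Fin 0 => (0 : R ⧸ nilradical R)) I ?_ ?_
    · rw [Set.range_eq_empty, Submodule.span_empty, hI]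
    · have hsub : Subsingleton (Fin 0 → R ⧸ nilradical R) :=
        ⟨fun a b => funext fun i => i.elim0⟩
      have : LinearMap.ker (Fintype.linearCombination (R ⧸ nilradical R)
          (fun _ : Fin 0 => (0 : R ⧸ nilradical R))) = ⊥ := Subsingleton.elim _ _
      rw [this]
      exact Submodule.fg_bot
  · push_neg at hcase
    obtain ⟨k, hk⟩ := hcase
    have hJnn : ¬ Submodule.span R (Set.range y) ≤ nilradical R := fun hle =>
      hk (hle (Submodule.subset_span ⟨k, rfl⟩))
    have hJfp := h _ (Submodule.fg_span (Set.finite_range y)) hJnn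
    have hL := ker_fg_of_fp y _ rfl hJfp
    obtain ⟨m, v, hv⟩ := Submodule.fg_iff_exists_fin_generating_family.mp hL
    set w : Fin m → (Fin n → R ⧸ nilradical R) := fun j i => π (v j i) with hw
    have key : LinearMap.ker (Fintype.linearCombination (R ⧸ nilradical R) s)
        = Submodule.span (R ⧸ nilradical R) (Set.range w) := by
      apply le_antisymm
      · intro cbar hc
        rw [LinearMap.mem_ker, Fintype.linearCombination_apply] at hc
        choose a ha using fun i => Ideal.Quotient.mk_surjective (cbar i)
        have ht : (∑ i : Fin n, a i * y i) ∈ nilradical R := by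
          have h1 : ∑ i : Fin n, π (a i * y i) = ∑ i : Fin n, cbar i • s i :=
            Finset.sum_congr rfl fun i _ => by rw [map_mul, ha, hy, smul_eq_mul]
          rw [← Ideal.Quotient.eq_zero_iff_mem, map_sum, h1, hc]
        obtain ⟨dd, hdy⟩ := Ideal.mem_span_singleton'.mp (hR.2 (y k) hk ht)
        have hdN : dd ∈ nilradical R := by
          rcases hR.1.mem_or_mem (hdy ▸ ht) with h' | h'
          · exact h'
          · exact absurd h' hk
        set a' : Fin n → R := fun i => a i - dd * (Pi.single k (1:R) : Fin n → R) i with ha'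
        have ha'ker : a' ∈ LinearMap.ker (Fintype.linearCombination R y) := by
          rw [LinearMap.mem_ker, Fintype.linearCombination_apply]
          have h2 : ∑ i : Fin n, a' i • y i
              = (∑ i : Fin n, a i * y i) - dd * ∑ i : Fin n,
                (Pi.single k (1:R) : Fin n → R) i * y i := by
            rw [Finset.mul_sum, ← Finset.sum_sub_distrib]
            refine Finset.sum_congr rfl fun i _ => by rw [ha']; ring_nf
          rw [h2]
          have h3 : ∑ i : Fin n, (Pi.single k (1:R) : Fin n → R) i * y i = y k := by
            simp [Pi.single_apply]
          rw [h3, hdy, sub_self]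
        rw [← hv] at ha'ker
        obtain ⟨rr, hrr⟩ := (Submodule.mem_span_range_iff_exists_fun R).mp ha'ker
        refine (Submodule.mem_span_range_iff_exists_fun (R ⧸ nilradical R)).mpr ⟨fun j => π (rr j), ?_⟩
        funext i
        have h4 : π dd = 0 := Ideal.Quotient.eq_zero_iff_mem.mpr hdN
        have h5 : cbar i = π (a' i) := by
          rw [← ha i, ha']
          rw [map_sub, map_mul, h4, zero_mul, sub_zero]
        calc (∑ j, π (rr j) • w j) i = ∑ j, π (rr j) * π (v j i) := by
              simp [Finset.sum_apply, hw, smul_eq_mul]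
          _ = π (∑ j, rr j * v j i) := by rw [map_sum]; exact Finset.sum_congr rfl fun j _ => (map_mul _ _ _).symm
          _ = π (a' i) := by
              congr 1
              have := congrFun hrr i
              simpa [Finset.sum_apply, smul_eq_mul] using this
          _ = cbar i := h5.symm
      · rw [Submodule.span_le]
        rintro _ ⟨j, rfl⟩
        rw [SetLike.mem_coe, LinearMap.mem_ker, Fintype.linearCombination_apply]
        have hvj : v j ∈ LinearMap.ker (Fintype.linearCombination R y) := by
          rw [← hv]; exact Submodule.subset_span ⟨j, rfl⟩
        rw [LinearMap.mem_ker, Fintype.linearCombination_apply] at hvj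
        have h6 : ∑ i, w j i • s i = π (∑ i, v j i * y i) := by
          rw [map_sum]
          exact Finset.sum_congr rfl fun i _ => by rw [map_mul, hw, hy, smul_eq_mul]
        rw [h6]
        have h7 : ∑ i, v j i * y i = 0 := by
          simpa [smul_eq_mul] using hvj
        rw [h7, map_zero]
    refine fp_of_ker_fg s I hs ?_
    rw [key]
    exact Submodule.fg_span (Set.finite_range w)


/-- A φ-ring `R` is nonnil-coherent if and only if `R/Nil(R)` is a
coherent integral domain and `(0 :_R r)` is finitely generated for every
non-nilpotent element `r ∈ R`. -/
theorem nonnilCoherent_iff_quotient_coherent_domain (R : Type u) [CommRing R]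
    (hR : IsPhiRing R) :
    IsNonnilCoherent R ↔
      (IsDomain (R ⧸ nilradical R) ∧ IsCoherentRing (R ⧸ nilradical R)) ∧
        ∀ r : R, r ∉ nilradical R →
          (Submodule.colon (⊥ : Ideal R) (Ideal.span {r})).FG := by
  constructor
  · intro h
    refine ⟨⟨?_, quotient_coherent hR h⟩, fun r hr => ann_fg_of_nonnilCoherent h r hr⟩
    exact Ideal.Quotient.isDomain_iff_prime _ |>.mpr hR.1
  · rintro ⟨⟨_, hcoh⟩, hann⟩
    intro I hIfg hInn
    obtain ⟨n, x, hxspan⟩ := Submodule.fg_iff_exists_fin_generating_family.mp hIfg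
    refine fp_of_ker_fg x I hxspan (ker_lc_fg hR hcoh hann n x ?_)
    rw [hxspan]
    exact hInn
end

section
/- Let R be a nonnil-coherent φ-ring and T a finitely presented φ-torsion R-module generated by elements t_1, …, t_k, t_{k+1} with k ≥ 1. Then the submodule T_k of T generated by t_1, …, t_k is finitely presented. -/
open CategoryTheory

universe u

/-- Let `R` be a nonnil-coherent φ-ring and `T` a finitely presented
φ-torsion module generated by `t 0, …, t k` (with `k ≥ 1` generators before the last).
Then the submodule generated by the first `k` generators is finitely presented. -/
theorem submodule_span_finitePresentation (R : Type u) [CommRing R] (hR : IsPhiRing R)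
    (hcoh : IsNonnilCoherent R) (T : Type u) [AddCommGroup T] [Module R T]
    (hfp : Module.FinitePresentation R T) (htor : IsPhiTorsion R T)
    (k : ℕ) (hk : 1 ≤ k) (t : Fin (k + 1) → T)
    (hgen : Submodule.span R (Set.range t) = ⊤) :
    Module.FinitePresentation R
      (Submodule.span R (t '' {i : Fin (k + 1) | (i : ℕ) < k})) := by
    classical
  haveI := hfp
  set N : Submodule R T := Submodule.span R (t '' {i : Fin (k + 1) | (i : ℕ) < k}) with hN
  have hNfg : N.FG := Submodule.fg_span ((Set.toFinite _).image t)
  haveI hCfp : Module.FinitePresentation R (T ⧸ N) :=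
    Module.finitePresentation_of_surjective N.mkQ N.mkQ_surjective
      (by rw [Submodule.ker_mkQ]; exact hNfg)
  set tl : T := t (Fin.last k) with htl
  set c : T ⧸ N := N.mkQ tl with hc
  -- every generator maps into span {c}
  have hgen' : ∀ i : Fin (k + 1), N.mkQ (t i) ∈ Submodule.span R {c} := by
    intro i
    rcases lt_or_eq_of_le (Nat.lt_succ_iff.mp i.isLt) with hi | hi
    · have : t i ∈ N := Submodule.subset_span ⟨i, hi, rfl⟩
      have : N.mkQ (t i) = 0 := (Submodule.Quotient.mk_eq_zero N).mpr this
      rw [this]; exact Submodule.zero_mem _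
    · have : i = Fin.last k := Fin.ext hi
      rw [this]; exact Submodule.subset_span rfl
  have hctop : Submodule.span R {c} = ⊤ := by
    rw [← top_le_iff]
    have h1 : Submodule.map N.mkQ ⊤ = ⊤ := by
      rw [Submodule.map_top, LinearMap.range_eq_top]; exact N.mkQ_surjective
    rw [← h1, ← hgen, Submodule.map_span]
    refine Submodule.span_le.mpr ?_
    rintro _ ⟨_, ⟨i, rfl⟩, rfl⟩
    exact hgen' i
  set φ : R →ₗ[R] T ⧸ N := LinearMap.toSpanSingleton R (T ⧸ N) c with hφdef
  have hφ : Function.Surjective φ := by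
    rw [← LinearMap.range_eq_top, ← LinearMap.span_singleton_eq_range]
    exact hctop
  set I : Ideal R := LinearMap.ker φ with hI
  have hIfg : I.FG := Module.FinitePresentation.fg_ker φ hφ
  have hInonnil : ¬ I ≤ nilradical R := by
    obtain ⟨J, hJ, hJ0⟩ := htor tl
    intro h
    refine hJ (le_trans (fun a ha => ?_) h)
    have : φ a = N.mkQ (a • tl) := by
      simp [hφdef, LinearMap.toSpanSingleton_apply, hc]
    simp only [hI, LinearMap.mem_ker, this, hJ0 a ha, map_zero]
  haveI hIfp : Module.FinitePresentation R I := hcoh I hIfg hInonnil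
  -- the pullback L
  set g : T × R →ₗ[R] T ⧸ N :=
    N.mkQ ∘ₗ LinearMap.fst R T R - φ ∘ₗ LinearMap.snd R T R with hg
  set L : Submodule R (T × R) := LinearMap.ker g with hL
  have memL : ∀ x : T × R, x ∈ L ↔ N.mkQ x.1 = φ x.2 := by
    intro x; simp [hL, hg, LinearMap.mem_ker, sub_eq_zero]
  set p₁ : L →ₗ[R] T := (LinearMap.fst R T R).comp L.subtype with hp₁
  have hp₁surj : Function.Surjective p₁ := by
    intro x
    obtain ⟨a, ha⟩ := hφ (N.mkQ x)
    exact ⟨⟨(x, a), (memL (x, a)).mpr ha.symm⟩, rfl⟩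
  -- ker p₁ ≅ I
  have hmem1 : ∀ a : I, ((0 : T), (a : R)) ∈ L := by
    intro a
    rw [memL]
    have h0 : φ (a : R) = 0 := a.2
    simp [h0]
  set f : I →ₗ[R] T × R := LinearMap.prod 0 I.subtype with hf
  have hfL : ∀ a : I, f a ∈ L := fun a => hmem1 a
  set f' : I →ₗ[R] L := f.codRestrict L hfL with hf'
  have hfker : ∀ a : I, f' a ∈ LinearMap.ker p₁ := by
    intro a; simp [hp₁, hf', hf, LinearMap.mem_ker]
  set f'' : I →ₗ[R] LinearMap.ker p₁ := f'.codRestrict (LinearMap.ker p₁) hfker with hf''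
  have hf''surj : Function.Surjective f'' := by
    rintro ⟨⟨⟨x, a⟩, hxa⟩, hker⟩
    have hx0 : x = 0 := hker
    have haI : a ∈ I := by
      rw [memL] at hxa
      rw [hI, LinearMap.mem_ker, ← hxa, hx0, map_zero]
    refine ⟨⟨a, haI⟩, ?_⟩
    apply Subtype.ext; apply Subtype.ext
    simp [hf'', hf', hf, hx0]
  have hf''inj : Function.Injective f'' := by
    intro a b hab
    apply Subtype.ext
    have := congrArg (fun z => (((z : LinearMap.ker p₁) : L) : T × R).2) hab
    simpa [hf'', hf', hf] using this
  haveI : Module.FinitePresentation R (LinearMap.ker p₁) :=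
    Module.finitePresentation_of_surjective (M := I) (N := LinearMap.ker p₁) f'' hf''surj
      (by rw [LinearMap.ker_eq_bot_of_injective hf''inj]; exact Submodule.fg_bot)
  haveI hLfp : Module.FinitePresentation R L :=
    Module.finitePresentation_of_ker p₁ hp₁surj
  -- the map q : L → N
  set ρ : L →ₗ[R] T :=
    (LinearMap.toSpanSingleton R T tl) ∘ₗ (LinearMap.snd R T R) ∘ₗ L.subtype with hρ
  set q : L →ₗ[R] T := p₁ - ρ with hq
  have hqmem : ∀ x : L, q x ∈ N := by
    rintro ⟨⟨x, a⟩, hxa⟩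
    rw [memL] at hxa
    rw [← Submodule.Quotient.mk_eq_zero N]
    show Submodule.Quotient.mk (x - a • tl) = (0 : T ⧸ N)
    rw [Submodule.Quotient.mk_sub, Submodule.Quotient.mk_smul]
    have h1 : (Submodule.Quotient.mk x : T ⧸ N) = φ a := hxa
    rw [h1]
    simp [hφdef, LinearMap.toSpanSingleton_apply, hc, sub_eq_zero]
  set q' : L →ₗ[R] N := q.codRestrict N hqmem with hq'
  have hq'surj : Function.Surjective q' := by
    rintro ⟨n, hn⟩
    have hmem : ((n, (0 : R)) : T × R) ∈ L := by
      rw [memL]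
      simp [(Submodule.Quotient.mk_eq_zero N).mpr hn]
    refine ⟨⟨(n, 0), hmem⟩, ?_⟩
    apply Subtype.ext
    simp [hq', hq, hp₁, hρ, LinearMap.toSpanSingleton_apply]
  set σ : R →ₗ[R] T × R := LinearMap.prod (LinearMap.toSpanSingleton R T tl) LinearMap.id with hσ
  have hσL : ∀ a : R, σ a ∈ L := by
    intro a
    rw [memL]
    simp [hσ, hc, hφdef, LinearMap.toSpanSingleton_apply]
  set σ' : R →ₗ[R] L := σ.codRestrict L hσL with hσ'
  have hker : LinearMap.ker q' = LinearMap.range σ' := by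
    ext ⟨⟨x, a⟩, hxa⟩
    constructor
    · intro h
      have h0 : x - a • tl = 0 := by
        have := congrArg (Subtype.val) (show q' ⟨(x, a), hxa⟩ = 0 from h)
        simpa [hq', hq, hp₁, hρ, LinearMap.toSpanSingleton_apply] using this
      refine ⟨a, ?_⟩
      apply Subtype.ext
      simp [hσ', hσ, LinearMap.toSpanSingleton_apply, Prod.ext_iff,
        (sub_eq_zero.mp h0).symm]
    · rintro ⟨b, hb⟩
      have hb' := congrArg Subtype.val hb
      simp only [hσ', hσ, LinearMap.codRestrict_apply, LinearMap.prod_apply, Pi.prod,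
        LinearMap.toSpanSingleton_apply, LinearMap.id_apply] at hb'
      have hx : x = b • tl := by
        have := congrArg Prod.fst hb'; simpa using this.symm
      have hab : a = b := by
        have := congrArg Prod.snd hb'; simpa using this.symm
      apply Subtype.ext
      simp [hq', hq, hp₁, hρ, LinearMap.toSpanSingleton_apply, hx, hab]
  have hkerfg : (LinearMap.ker q').FG := by
    rw [hker, ← Submodule.map_top]
    exact Submodule.FG.map σ' Module.Finite.fg_top
  exact Module.finitePresentation_of_surjective q' hq'surj hkerfg
end

section
/- Let R be a φ-ring. Then R is a φ-IF ring if and only if for every R-module M, M is φ-flat if and only if M is nonnil-FP-injective. -/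
open CategoryTheory

universe u

namespace PhiIFAux

variable {R : Type u} [CommRing R]

local notation "Z" => nilradical R

-- membership in nilradical from power
lemma mem_Z_of_pow {c : R} {n : ℕ} (h : c ^ n ∈ Z) : c ∈ Z := by
  rw [mem_nilradical] at h ⊢
  obtain ⟨m, hm⟩ := h
  exact ⟨n * m, by rw [← hm, pow_mul]⟩

/-- divided prime: z • g ∈ Z • L whenever g is "torsion mod L" -/
lemma smul_mem_smulZL (hP : (nilradical R).IsPrime)
    (hdiv : ∀ x : R, x ∉ nilradical R → nilradical R ≤ Ideal.span {x})
    {G : Type u} [AddCommGroup G] [Module R G] (L : Submodule R G)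
    (htor : ∀ g : G, ∃ I : Ideal R, ¬ I ≤ nilradical R ∧ ∀ a ∈ I, a • g ∈ L)
    {z : R} (hz : z ∈ Z) (g : G) : z • g ∈ (nilradical R) • L := by
  obtain ⟨I, hI, hIg⟩ := htor g
  obtain ⟨t, htI, htZ⟩ := SetLike.not_le_iff_exists.mp hI
  -- z ∈ span {t}
  obtain ⟨c, hc⟩ := Ideal.mem_span_singleton'.mp (hdiv t htZ hz)
  -- c ∈ Z
  have hcZ : c ∈ Z := by
    obtain ⟨n, hn⟩ := mem_nilradical.mp hz
    have : c ^ n * t ^ n ∈ Z := by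
      rw [← mul_pow, hc, hn]; exact zero_mem _
    rcases hP.mem_or_mem this with h | h
    · exact mem_Z_of_pow h
    · exact absurd (mem_Z_of_pow h) htZ
  have : z • g = c • (t • g) := by rw [← mul_smul, hc]
  rw [this]
  exact Submodule.smul_mem_smul hcZ (hIg t htI)

open TensorProduct in
/-- If G/L is φ-torsion, then L ⊗ D → G ⊗ D is injective, where D = R/Nil(R). -/
lemma rTensor_subtype_injective (hP : (nilradical R).IsPrime)
    (hdiv : ∀ x : R, x ∉ nilradical R → nilradical R ≤ Ideal.span {x})
    {G : Type u} [AddCommGroup G] [Module R G] (L : Submodule R G)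
    (htor : ∀ g : G, ∃ I : Ideal R, ¬ I ≤ nilradical R ∧ ∀ a ∈ I, a • g ∈ L) :
    Function.Injective (LinearMap.rTensor (R ⧸ (nilradical R)) L.subtype) := by
  set D := R ⧸ (nilradical R)
  -- the equivalences
  set eL := TensorProduct.tensorQuotEquivQuotSMul (↥L) (nilradical R)
  set eG := TensorProduct.tensorQuotEquivQuotSMul G (nilradical R)
  -- the quotient map
  have hle : (nilradical R) • (⊤ : Submodule R L) ≤
      Submodule.comap L.subtype ((nilradical R) • (⊤ : Submodule R G)) := by
    intro x hx
    refine Submodule.smul_induction_on hx ?_ ?_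
    · intro r hr n _
      exact Submodule.smul_mem_smul hr trivial
    · intro x y hx hy
      simpa using Submodule.add_mem _ hx hy
  set μ : (↥L ⧸ (nilradical R) • (⊤ : Submodule R L)) →ₗ[R]
      (G ⧸ (nilradical R) • (⊤ : Submodule R G)) :=
    Submodule.mapQ _ _ L.subtype hle
  -- commutativity: eG ∘ rTensor = μ ∘ eL
  have hcomm : ∀ x, eG (LinearMap.rTensor D L.subtype x) = μ (eL x) := by
    intro x
    have : (eG.toLinearMap ∘ₗ LinearMap.rTensor D L.subtype) x =
        (μ ∘ₗ eL.toLinearMap) x := by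
      refine LinearMap.congr_fun ?_ x
      apply TensorProduct.ext'
      intro l d
      obtain ⟨r, rfl⟩ := Ideal.Quotient.mk_surjective d
      simp only [LinearMap.coe_comp, Function.comp_apply, LinearEquiv.coe_coe,
        LinearMap.rTensor_tmul]
      show eG ((L.subtype l) ⊗ₜ (Ideal.Quotient.mk _ r)) = μ (eL (l ⊗ₜ (Ideal.Quotient.mk _ r)))
      have h1 : eG ((L.subtype l) ⊗ₜ (Ideal.Quotient.mk _ r)) =
          Submodule.Quotient.mk (r • (L.subtype l)) := by
        simp [eG, TensorProduct.tensorQuotEquivQuotSMul]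
      have h2 : eL (l ⊗ₜ (Ideal.Quotient.mk _ r)) = Submodule.Quotient.mk (r • l) := by
        simp [eL, TensorProduct.tensorQuotEquivQuotSMul]
      rw [h1, h2]
      simp [μ, Submodule.mapQ_apply]
    simpa using this
  -- μ is injective
  have hμ : Function.Injective μ := by
    rw [← LinearMap.ker_eq_bot]
    rw [Submodule.eq_bot_iff]
    intro x hx
    obtain ⟨l, rfl⟩ := Submodule.Quotient.mk_surjective _ x
    rw [LinearMap.mem_ker, Submodule.mapQ_apply, Submodule.Quotient.mk_eq_zero] at hx
    rw [Submodule.Quotient.mk_eq_zero]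
    -- (l : G) ∈ Z • ⊤_G; show l ∈ Z • ⊤_L
    -- first: Z • ⊤_G ≤ map subtype (Z • ⊤_L)... we show directly by induction
    have key : ∀ g ∈ (nilradical R) • (⊤ : Submodule R G),
        g ∈ Submodule.map L.subtype ((nilradical R) • (⊤ : Submodule R L)) := by
      intro g hg
      refine Submodule.smul_induction_on hg ?_ ?_
      · intro z hz n _
        -- z • n ∈ Z • L  (as submodule of G); convert
        have h1 : z • n ∈ (nilradical R) • L := smul_mem_smulZL hP hdiv L htor hz n
        have h2 : (nilradical R) • L = Submodule.map L.subtype ((nilradical R) • ⊤) := by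
          rw [Submodule.map_smul'', Submodule.map_top, Submodule.range_subtype]
        rwa [h2] at h1
      · intro x y hx hy
        exact Submodule.add_mem _ hx hy
    obtain ⟨l', hl', hll⟩ := key _ hx
    have : l' = l := Subtype.ext hll
    rwa [← this]
  intro x y hxy
  apply eL.injective
  apply hμ
  rw [← hcomm, ← hcomm, hxy]

open TensorProduct in
/-- Homs from L to W = (R/Nil)⁺ extend to G when G/L is φ-torsion. -/
lemma extend_to_characterModule (hP : (nilradical R).IsPrime)
    (hdiv : ∀ x : R, x ∉ nilradical R → nilradical R ≤ Ideal.span {x})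
    {G : Type u} [AddCommGroup G] [Module R G] (L : Submodule R G)
    (htor : ∀ g : G, ∃ I : Ideal R, ¬ I ≤ nilradical R ∧ ∀ a ∈ I, a • g ∈ L)
    (f : L →ₗ[R] CharacterModule (R ⧸ (nilradical R))) :
    ∃ h : G →ₗ[R] CharacterModule (R ⧸ (nilradical R)), ∀ l : L, h l = f l := by
  set D := R ⧸ (nilradical R)
  set ψ := LinearMap.rTensor D L.subtype
  have hψ : Function.Injective ψ := rTensor_subtype_injective hP hdiv L htor
  obtain ⟨χG, hχG⟩ := CharacterModule.dual_surjective_of_injective ψ hψ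
    (CharacterModule.uncurry f)
  refine ⟨CharacterModule.curry χG, ?_⟩
  intro l
  ext d
  have h1 : CharacterModule.curry χG (L.subtype l) d = χG ((L.subtype l) ⊗ₜ d) := rfl
  have h2 : χG ((L.subtype l) ⊗ₜ d) = (CharacterModule.dual ψ χG) (l ⊗ₜ d) := by
    show _ = χG (ψ (l ⊗ₜ d))
    rw [LinearMap.rTensor_tmul]
  have h3 : (CharacterModule.uncurry f) (l ⊗ₜ d) = f l d := by
    rw [CharacterModule.uncurry_apply]
    rfl
  rw [show (CharacterModule.curry χG) (l : G) d = CharacterModule.curry χG (L.subtype l) d from rfl,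
    h1, h2, hχG, h3]

open Limits in
lemma subsingleton_of_isZero' {M : ModuleCat.{u} R} (h : IsZero M) : Subsingleton M := by
  have h0 : (𝟙 M : M ⟶ M) = 0 := h.eq_of_src _ _
  constructor
  intro a b
  have ha : a = (0 : M ⟶ M) a := by rw [← h0]; rfl
  have hb : b = (0 : M ⟶ M) b := by rw [← h0]; rfl
  rw [ha, hb]; rfl

open Limits in
lemma NI_W (hP : (nilradical R).IsPrime)
    (hdiv : ∀ x : R, x ∉ nilradical R → nilradical R ≤ Ideal.span {x})
    (T : Type u) [AddCommGroup T] [Module R T]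
    (hT : ∀ t : T, ∃ I : Ideal R, ¬ I ≤ nilradical R ∧ ∀ a ∈ I, a • t = 0) :
    Subsingleton (((Ext R (ModuleCat.{u} R) 1).obj
      (Opposite.op (ModuleCat.of R T))).obj
      (ModuleCat.of R (CharacterModule (R ⧸ (nilradical R))))) := by
  set W := CharacterModule (R ⧸ (nilradical R)) with hW
  set TC := ModuleCat.of R T with hTC
  set WC := ModuleCat.of R W with hWC
  letI P : ProjectiveResolution TC := ProjectiveResolution.of TC
  -- the differential and range
  set d10 : (P.complex.X 1 : Type u) →ₗ[R] (P.complex.X 0 : Type u) :=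
    (P.complex.d 1 0 : P.complex.X 1 ⟶ P.complex.X 0).hom with hd10
  set L : Submodule R (P.complex.X 0) := LinearMap.range d10 with hL
  -- π
  set π : (P.complex.X 0 : Type u) →ₗ[R] T := (P.π.f 0 : P.complex.X 0 ⟶ TC).hom with hπ
  have hπsur : Function.Surjective π := by
    have h := (ModuleCat.epi_iff_surjective (P.π.f 0)).mp inferInstance
    exact h
  have hπker : L = LinearMap.ker π := by
    have h := P.exact₀
    rw [ShortComplex.moduleCat_exact_iff_range_eq_ker] at h
    exact h
  -- torsion of quotient by L
  have htorL : ∀ g : (P.complex.X 0 : Type u), ∃ I : Ideal R,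
      ¬ I ≤ nilradical R ∧ ∀ a ∈ I, a • g ∈ L := by
    intro g
    obtain ⟨I, hI, hIt⟩ := hT (π g)
    refine ⟨I, hI, fun a ha => ?_⟩
    rw [hπker, LinearMap.mem_ker, map_smul, hIt a ha]
  -- exactness of the Hom complex at 1
  have hexact : ((P.complex.linearYonedaObj R WC).sc' 0 1 2).Exact := by
    rw [ShortComplex.moduleCat_exact_iff]
    intro ψ₀ hψ₀
    let ψ : P.complex.X 1 ⟶ WC := ψ₀
    have hψ : (P.complex.linearYonedaObj R WC).d 1 2 ψ = 0 := hψ₀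
    have hψ' : P.complex.d 2 1 ≫ ψ = 0 := by
      have : (P.complex.linearYonedaObj R WC).d 1 2 ψ = P.complex.d 2 1 ≫ ψ := by
        rfl
      rw [← this]; exact hψ
    -- ker d10 ≤ ker ψ
    have hrk : LinearMap.range (P.complex.d 2 1 : P.complex.X 2 ⟶ P.complex.X 1).hom
        = LinearMap.ker d10 := by
      have h := P.complex_exactAt_succ 0
      rw [HomologicalComplex.exactAt_iff' _ 2 1 0 (by simp) (by simp),
        ShortComplex.moduleCat_exact_iff_range_eq_ker] at h
      exact h
    have hkk : LinearMap.ker d10 ≤ LinearMap.ker ψ.hom := by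
      rw [← hrk]
      rintro x ⟨y, rfl⟩
      have := LinearMap.congr_fun (congrArg ModuleCat.Hom.hom (hψ' : _ = (0 : P.complex.X 2 ⟶ WC))) y
      simpa using this
    set e := LinearMap.quotKerEquivRange d10 with he
    set f₀ : L →ₗ[R] W :=
      (Submodule.liftQ (LinearMap.ker d10) ψ.hom hkk) ∘ₗ
        (e.symm : (LinearMap.range d10) →ₗ[R] _) with hf₀
    obtain ⟨h, hh⟩ := extend_to_characterModule hP hdiv L htorL f₀
    refine ⟨(ModuleCat.ofHom h : P.complex.X 0 ⟶ WC), ?_⟩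
    show (P.complex.linearYonedaObj R WC).d 0 1 (ModuleCat.ofHom h : P.complex.X 0 ⟶ WC) = ψ
    have hd01 : (P.complex.linearYonedaObj R WC).d 0 1
        (ModuleCat.ofHom h : P.complex.X 0 ⟶ WC) = P.complex.d 1 0 ≫ (ModuleCat.ofHom h : P.complex.X 0 ⟶ WC) := by
      rfl
    rw [hd01]
    refine ModuleCat.hom_ext (LinearMap.ext fun x => ?_)
    have hmem : d10 x ∈ L := ⟨x, rfl⟩
    show h (d10 x) = ψ x
    have h3 : h (d10 x) = f₀ ⟨d10 x, hmem⟩ := hh ⟨d10 x, hmem⟩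
    have h4 : f₀ ⟨d10 x, hmem⟩ = ψ x := by
      rw [hf₀]
      have : (⟨d10 x, hmem⟩ : L) = e (Submodule.Quotient.mk x) := by
        apply Subtype.ext
        simp [he, LinearMap.quotKerEquivRange_apply_mk]
      simp only [LinearMap.coe_comp, Function.comp_apply, this, LinearEquiv.coe_coe,
        LinearEquiv.symm_apply_apply]
      rw [Submodule.liftQ_apply]
    rw [h3, h4]
  -- conclude
  have h1 : (P.complex.linearYonedaObj R WC).ExactAt 1 := by
    rw [HomologicalComplex.exactAt_iff' _ 0 1 2 (by simp) (by simp)]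
    exact hexact
  rw [HomologicalComplex.exactAt_iff_isZero_homology] at h1
  exact subsingleton_of_isZero' (h1.of_iso (P.isoExt 1 WC))

/-- elements of span{s} • ⊤ are of the form s • m -/
lemma span_smul_top_mem {M : Type u} [AddCommGroup M] [Module R M] (s : R) {x : M}
    (hx : x ∈ (Ideal.span {s} : Ideal R) • (⊤ : Submodule R M)) : ∃ m : M, x = s • m := by
  refine Submodule.smul_induction_on hx ?_ ?_
  · intro r hr n _
    obtain ⟨c, hc⟩ := Ideal.mem_span_singleton'.mp hr
    exact ⟨c • n, by rw [← mul_smul, mul_comm, hc]⟩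
  · rintro x y ⟨m, rfl⟩ ⟨m', rfl⟩
    exact ⟨m + m', by rw [smul_add]⟩

/-- z • w = 0 for z nilpotent and w a character of R/Nil -/
lemma nil_smul_char_eq_zero {z : R} (hz : z ∈ nilradical R)
    (w : CharacterModule (R ⧸ (nilradical R))) : z • w = 0 := by
  ext d
  obtain ⟨x, rfl⟩ := Ideal.Quotient.mk_surjective d
  rw [CharacterModule.smul_apply]
  have : z • (Ideal.Quotient.mk (nilradical R) x) = Ideal.Quotient.mk (nilradical R) (z * x) := rfl
  rw [this, Ideal.Quotient.eq_zero_iff_mem.mpr (Ideal.mul_mem_right x _ hz), map_zero]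
  rfl

open Limits in
lemma isUnit_of_tor_subsingleton (hP : (nilradical R).IsPrime)
    {s : R} (hs : s ∉ nilradical R)
    (htor : Subsingleton (((Tor (ModuleCat.{u} R) 1).obj
        (ModuleCat.of R (R ⧸ (Ideal.span {s} : Ideal R)))).obj
        (ModuleCat.of R (CharacterModule (R ⧸ (nilradical R)))))) :
    IsUnit s := by
  set D := R ⧸ (nilradical R) with hD
  set W := CharacterModule D with hWdef
  set WC := ModuleCat.of R W with hWC
  set T₀ := R ⧸ (Ideal.span {s} : Ideal R) with hT₀
  set sD : Submodule R D := (Ideal.span {s} : Ideal R) • (⊤ : Submodule R D) with hsD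
  by_cases h1 : (Submodule.Quotient.mk (Ideal.Quotient.mk (nilradical R) 1) : D ⧸ sD) = 0
  · -- 1 ∈ sD, hence s is a unit
    rw [Submodule.Quotient.mk_eq_zero] at h1
    obtain ⟨d, hd⟩ := span_smul_top_mem s h1
    obtain ⟨c, rfl⟩ := Ideal.Quotient.mk_surjective d
    have : Ideal.Quotient.mk (nilradical R) (1 - s * c) = 0 := by
      rw [map_sub, hd]
      have : s • (Ideal.Quotient.mk (nilradical R) c) =
        Ideal.Quotient.mk (nilradical R) (s * c) := rfl
      rw [this]
      ring
    rw [Ideal.Quotient.eq_zero_iff_mem] at this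
    have hnil : IsNilpotent (1 - s * c) := mem_nilradical.mp this
    have : IsUnit (s * c) := by
      have := hnil.isUnit_one_sub
      simpa using this
    exact isUnit_of_mul_isUnit_left this
  · exfalso
    -- construct the character χ₀
    obtain ⟨χ₁, hχ₁⟩ := CharacterModule.exists_character_apply_ne_zero_of_ne_zero h1
    set χ₀ : W := χ₁.comp (sD.mkQ).toAddMonoidHom with hχ₀def
    have hχ1 : χ₀ (Ideal.Quotient.mk (nilradical R) 1) ≠ 0 := hχ₁
    have hχs : ∀ d : D, χ₀ (s • d) = 0 := by
      intro d
      have : (sD.mkQ) (s • d) = 0 := by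
        rw [Submodule.mkQ_apply, Submodule.Quotient.mk_eq_zero]
        exact Submodule.smul_mem_smul (Ideal.subset_span rfl) trivial
      show χ₁ ((sD.mkQ) (s • d)) = 0
      rw [this, map_zero]
    have hsχ : s • χ₀ = 0 := by
      ext d
      rw [CharacterModule.smul_apply, hχs]
      rfl
    -- the projective resolution of WC
    letI P : ProjectiveResolution WC := ProjectiveResolution.of WC
    set d10 : (P.complex.X 1 : Type u) →ₗ[R] (P.complex.X 0 : Type u) :=
      (P.complex.d 1 0 : P.complex.X 1 ⟶ P.complex.X 0).hom with hd10
    set K : Submodule R (P.complex.X 0) := LinearMap.range d10 with hK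
    set π : (P.complex.X 0 : Type u) →ₗ[R] W := (P.π.f 0 : P.complex.X 0 ⟶ WC).hom with hπ
    have hπsur : Function.Surjective π := by
      have h := (ModuleCat.epi_iff_surjective (P.π.f 0)).mp inferInstance
      exact h
    have hπker : K = LinearMap.ker π := by
      have h := P.exact₀
      rw [ShortComplex.moduleCat_exact_iff_range_eq_ker] at h
      exact h
    obtain ⟨p₀, hp₀⟩ := hπsur χ₀
    have hsp₀K : s • p₀ ∈ K := by
      rw [hπker, LinearMap.mem_ker, map_smul, hp₀, hsχ]
    set k₀ : (K : Type u) := ⟨s • p₀, hsp₀K⟩ with hk₀def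
    set SK : Submodule R (K : Type u) := (Ideal.span {s} : Ideal R) • ⊤ with hSK
    -- k₀ is not in SK
    have hk₀ : (Submodule.Quotient.mk k₀ : (K : Type u) ⧸ SK) ≠ 0 := by
      intro hcon
      rw [Submodule.Quotient.mk_eq_zero] at hcon
      obtain ⟨k, hk⟩ := span_smul_top_mem s hcon
      set q : (P.complex.X 0 : Type u) := p₀ - (k : (P.complex.X 0 : Type u)) with hq
      have hsq : s • q = 0 := by
        have : s • p₀ = s • (k : (P.complex.X 0 : Type u)) := congrArg Subtype.val hk
        rw [hq, smul_sub, ← this, sub_self]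
      have hπq : π q = χ₀ := by
        have hkK : π (k : (P.complex.X 0 : Type u)) = 0 :=
          LinearMap.mem_ker.mp (le_of_eq hπker k.2)
        rw [hq, map_sub, hp₀, hkK, sub_zero]
      -- projectivity
      have hproj : Module.Projective R (P.complex.X 0 : Type u) := by
        have hcat : Projective (ModuleCat.of R (P.complex.X 0 : Type u)) :=
          Projective.of_iso (Iso.refl (P.complex.X 0)) inferInstance
        exact (IsProjective.iff_projective _).mpr hcat
      obtain ⟨σ, hσ⟩ := Module.projective_def.mp hproj
      have hσq : s • (σ q) = 0 := by rw [← map_smul, hsq, map_zero]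
      have hcoef : ∀ i, (σ q) i ∈ nilradical R := by
        intro i
        have h0 : s * ((σ q) i) = 0 := by
          have := congrFun (congrArg DFunLike.coe hσq) i
          simpa using this
        have : s * ((σ q) i) ∈ nilradical R := by rw [h0]; exact zero_mem _
        rcases hP.mem_or_mem this with h | h
        · exact absurd h hs
        · exact h
      have hq_eq : q = (σ q).sum fun i r => r • i := by
        have := hσ q
        rw [Finsupp.linearCombination_apply] at this
        exact this.symm
      have hχ₀0 : χ₀ = 0 := by
        rw [← hπq, hq_eq, map_finsuppSum]
        have : ∀ i ∈ (σ q).support, π ((σ q) i • i) = 0 := by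
          intro i _
          rw [map_smul]
          have := nil_smul_char_eq_zero (hcoef i) (π i)
          exact this
        rw [Finsupp.sum, Finset.sum_congr rfl this, Finset.sum_const_zero]
      rw [hχ₀0] at hχ1
      exact hχ1 rfl
    -- character detecting k₀
    obtain ⟨χ₂, hχ₂⟩ := CharacterModule.exists_character_apply_ne_zero_of_ne_zero hk₀
    set χt : CharacterModule (K : Type u) := χ₂.comp (SK.mkQ).toAddMonoidHom with hχt
    have hχtk₀ : χt k₀ ≠ 0 := hχ₂
    have hχts : ∀ k : (K : Type u), χt (s • k) = 0 := by
      intro k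
      have : (SK.mkQ) (s • k) = 0 := by
        rw [Submodule.mkQ_apply, Submodule.Quotient.mk_eq_zero]
        exact Submodule.smul_mem_smul (Ideal.subset_span rfl) trivial
      show χ₂ ((SK.mkQ) (s • k)) = 0
      rw [this, map_zero]
    -- the functional
    set δ : (P.complex.X 1 : Type u) →ₗ[R] (K : Type u) := d10.rangeRestrict with hδ
    set γ : CharacterModule (P.complex.X 1 : Type u) := χt.comp δ.toAddMonoidHom with hγ
    have hsγ : s • γ = 0 := by
      ext y
      rw [CharacterModule.smul_apply]
      show χt (δ (s • y)) = 0
      rw [map_smul]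
      exact hχts _
    set cHat : R →ₗ[R] CharacterModule (P.complex.X 1 : Type u) :=
      LinearMap.toSpanSingleton R _ γ with hcHat
    have hspan : (Ideal.span {s} : Ideal R) ≤ LinearMap.ker cHat := by
      rw [Ideal.span_le]
      intro x hx
      rw [Set.mem_singleton_iff] at hx
      subst hx
      exact SetLike.mem_coe.mpr (LinearMap.mem_ker.mpr hsγ)
    set c : T₀ →ₗ[R] CharacterModule (P.complex.X 1 : Type u) :=
      Submodule.liftQ _ cHat hspan with hc
    set Φ := CharacterModule.uncurry c with hΦ
    -- exactness of the tensored complex at 1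
    set F := (MonoidalCategory.tensoringLeft (ModuleCat.{u} R)).obj
      (ModuleCat.of R T₀) with hF
    have hzero : IsZero ((F.leftDerived 1).obj WC) := by
      have : Subsingleton ((F.leftDerived 1).obj WC) := htor
      exact ModuleCat.isZero_of_subsingleton _
    have hhom : IsZero (((F.mapHomologicalComplex _).obj P.complex).homology 1) :=
      hzero.of_iso (P.isoLeftDerivedObj F 1).symm
    have hex : (((F.mapHomologicalComplex _).obj P.complex).sc' 2 1 0).Exact := by
      have h := HomologicalComplex.exactAt_iff_isZero_homology _ 1 |>.mpr hhom
      rw [HomologicalComplex.exactAt_iff' _ 2 1 0 (by simp) (by simp)] at h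
      exact h
    rw [ShortComplex.moduleCat_exact_iff] at hex
    -- the element ξ
    obtain ⟨y₁, hy₁⟩ : s • p₀ ∈ LinearMap.range d10 := hsp₀K
    set ξ : TensorProduct R T₀ (P.complex.X 1 : Type u) :=
      (Ideal.Quotient.mk (Ideal.span {s} : Ideal R) 1) ⊗ₜ y₁ with hξ
    have hgξ : (((F.mapHomologicalComplex _).obj P.complex).sc' 2 1 0).g ξ = 0 := by
      show (LinearMap.lTensor T₀ d10) ξ = 0
      rw [hξ, LinearMap.lTensor_tmul, hy₁]
      have h2 : (Ideal.Quotient.mk (Ideal.span {s} : Ideal R) 1) ⊗ₜ[R] (s • p₀) =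
          (s • Ideal.Quotient.mk (Ideal.span {s} : Ideal R) 1) ⊗ₜ[R] p₀ := by
        rw [TensorProduct.tmul_smul, TensorProduct.smul_tmul']
      rw [h2]
      have h3 : s • Ideal.Quotient.mk (Ideal.span {s} : Ideal R) 1 = 0 := by
        have : s • Ideal.Quotient.mk (Ideal.span {s} : Ideal R) 1 =
          Ideal.Quotient.mk (Ideal.span {s} : Ideal R) s := by
          show Ideal.Quotient.mk _ (s * 1) = _
          rw [mul_one]
        rw [this, Ideal.Quotient.eq_zero_iff_mem]
        exact Ideal.subset_span rfl
      rw [h3, TensorProduct.zero_tmul]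
    obtain ⟨w, hw⟩ := hex ξ hgξ
    -- Φ kills the image of the differential
    have hΦd : ∀ w' : TensorProduct R T₀ (P.complex.X 2 : Type u),
        Φ ((((F.mapHomologicalComplex _).obj P.complex).sc' 2 1 0).f w') = 0 := by
      intro w'
      show Φ ((LinearMap.lTensor T₀ (P.complex.d 2 1).hom) w') = 0
      induction w' using TensorProduct.induction_on with
      | zero => rw [map_zero, map_zero]
      | tmul t z =>
        rw [LinearMap.lTensor_tmul]
        obtain ⟨r, rfl⟩ := Ideal.Quotient.mk_surjective t
        have h4 : Φ ((Ideal.Quotient.mk _ r) ⊗ₜ[R] ((P.complex.d 2 1).hom z)) =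
            c (Ideal.Quotient.mk _ r) ((P.complex.d 2 1).hom z) := by
          rw [hΦ, CharacterModule.uncurry_apply]
          rfl
        rw [h4]
        have h5 : c (Ideal.Quotient.mk _ r) = r • γ := by
          rw [hc]
          show cHat r = r • γ
          rw [hcHat]
          rfl
        rw [h5, CharacterModule.smul_apply]
        show χt (δ (r • (P.complex.d 2 1).hom z)) = 0
        rw [← map_smul]
        have h6 : δ ((P.complex.d 2 1).hom (r • z)) = 0 := by
          apply Subtype.ext
          show d10 ((P.complex.d 2 1).hom (r • z)) = 0
          have := P.complex.d_comp_d 2 1 0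
          have h7 := LinearMap.congr_fun (congrArg ModuleCat.Hom.hom (this : _ = (0 : P.complex.X 2 ⟶ P.complex.X 0))) (r • z)
          exact h7
        rw [h6, map_zero]
      | add x y hx hy =>
        rw [map_add, map_add, hx, hy, add_zero]
    -- evaluate Φ at ξ
    have hΦξ : Φ ξ = χt k₀ := by
      rw [hΦ, hξ, CharacterModule.uncurry_apply]
      have h8 : c (Ideal.Quotient.mk _ 1) = γ := by
        rw [hc]
        show cHat 1 = γ
        rw [hcHat]
        show (1 : R) • γ = γ
        rw [one_smul]
      show c (Ideal.Quotient.mk _ 1) y₁ = χt k₀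
      rw [h8]
      show χt (δ y₁) = χt k₀
      congr 1
      apply Subtype.ext
      show d10 y₁ = s • p₀
      exact hy₁
    have := hΦd w
    rw [hw, hΦξ] at this
    exact hχtk₀ this

lemma tensor_subsingleton (T M : Type u) [AddCommGroup T] [AddCommGroup M] [Module R T]
    [Module R M] (h : Subsingleton T) : Subsingleton (TensorProduct R T M) := by
  constructor
  intro a b
  have hz : ∀ x : TensorProduct R T M, x = 0 := by
    intro x
    induction x using TensorProduct.induction_on with
    | zero => rfl
    | tmul t m => rw [Subsingleton.elim t 0, TensorProduct.zero_tmul]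
    | add x y hx hy => rw [hx, hy, add_zero]
  rw [hz a, hz b]

open Limits in
lemma tor_subsingleton_of_subsingleton (T M : Type u) [AddCommGroup T] [AddCommGroup M]
    [Module R T] [Module R M] (h : Subsingleton T) :
    Subsingleton (((Tor (ModuleCat.{u} R) 1).obj (ModuleCat.of R T)).obj (ModuleCat.of R M)) := by
  set TC := ModuleCat.of R T with hTC
  set MC := ModuleCat.of R M with hMC
  set F := (MonoidalCategory.tensoringLeft (ModuleCat.{u} R)).obj TC with hF
  letI P : ProjectiveResolution MC := ProjectiveResolution.of MC
  haveI : Subsingleton ((((F.mapHomologicalComplex _).obj P.complex).X 1) : Type u) :=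
    tensor_subsingleton T (P.complex.X 1 : Type u) h
  have h2 : IsZero (((F.mapHomologicalComplex _).obj P.complex).X 1) :=
    ModuleCat.isZero_of_subsingleton _
  have hex : ((F.mapHomologicalComplex _).obj P.complex).ExactAt 1 := by
    rw [HomologicalComplex.exactAt_iff]
    exact ShortComplex.exact_of_isZero_X₂ _ h2
  rw [HomologicalComplex.exactAt_iff_isZero_homology] at hex
  have h3 : IsZero ((F.leftDerived 1).obj MC) := hex.of_iso (P.isoLeftDerivedObj F 1)
  exact subsingleton_of_isZero' h3

open Limits in
lemma ext_subsingleton_of_subsingleton (T M : Type u) [AddCommGroup T] [AddCommGroup M]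
    [Module R T] [Module R M] (h : Subsingleton T) :
    Subsingleton (((Ext R (ModuleCat.{u} R) 1).obj (Opposite.op (ModuleCat.of R T))).obj
      (ModuleCat.of R M)) := by
  haveI : Subsingleton (ModuleCat.of R T : Type u) := h
  haveI hproj : Projective (ModuleCat.of R T) := by
    have hz : IsZero (ModuleCat.of R T) := ModuleCat.isZero_of_subsingleton _
    constructor
    intro E X f e he
    exact ⟨0, by rw [Limits.zero_comp]; exact (hz.eq_of_src _ _)⟩
  have h4 : IsZero (((Ext R (ModuleCat.{u} R) (0 + 1)).obj (Opposite.op (ModuleCat.of R T))).obj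
      (ModuleCat.of R M)) := isZero_Ext_succ_of_projective _ _ 0
  exact subsingleton_of_isZero' h4


end PhiIFAux

/-- A φ-ring `R` is a φ-IF ring if and only if the φ-flat modules are
exactly the nonnil-FP-injective modules. -/
theorem phiIF_iff_phiFlat_eq_nonnilFPInjective (R : Type u) [CommRing R]
    (hR : IsPhiRing R) :
    (∀ (M : Type u) [AddCommGroup M] [Module R M],
        IsNonnilInjective R M → IsPhiFlat R M) ↔
      ∀ (M : Type u) [AddCommGroup M] [Module R M],
        (IsPhiFlat R M ↔ IsNonnilFPInjective R M) := by
  obtain ⟨hP, hdiv⟩ := hR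
  constructor
  · intro H M _ _
    -- every nonnil element is a unit
    have hunit : ∀ s : R, s ∉ nilradical R → IsUnit s := by
      intro s hs
      apply PhiIFAux.isUnit_of_tor_subsingleton hP hs
      have hNI : IsNonnilInjective R (CharacterModule (R ⧸ (nilradical R))) := by
        intro T _ _ hT
        exact PhiIFAux.NI_W hP hdiv T hT
      have hPF := H _ hNI
      apply hPF
      intro t
      refine ⟨Ideal.span {s}, ?_, ?_⟩
      · intro hle
        exact hs (hle (Ideal.subset_span rfl))
      · intro a ha
        obtain ⟨x, rfl⟩ := Ideal.Quotient.mk_surjective t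
        show a • Ideal.Quotient.mk (Ideal.span {s} : Ideal R) x = 0
        have : a • Ideal.Quotient.mk (Ideal.span {s} : Ideal R) x =
            Ideal.Quotient.mk (Ideal.span {s} : Ideal R) (a * x) := rfl
        rw [this, Ideal.Quotient.eq_zero_iff_mem]
        exact Ideal.mul_mem_right x _ ha
    -- all φ-torsion modules are trivial
    have htriv : ∀ (T : Type u) [AddCommGroup T] [Module R T],
        IsPhiTorsion R T → Subsingleton T := by
      intro T _ _ hT
      constructor
      intro a b
      have hz : ∀ t : T, t = 0 := by
        intro t
        obtain ⟨I, hI, hIt⟩ := hT t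
        obtain ⟨a, haI, haZ⟩ := SetLike.not_le_iff_exists.mp hI
        obtain ⟨u, hu⟩ := hunit a haZ
        have h1 : a • t = 0 := hIt a haI
        have h2 : t = ((u⁻¹ : Rˣ) : R) • (a • t) := by
          rw [← mul_smul, ← hu, Units.inv_mul, one_smul]
        rw [h2, h1, smul_zero]
      rw [hz a, hz b]
    constructor
    · intro _ T _ _ _ hT
      exact PhiIFAux.ext_subsingleton_of_subsingleton T M (htriv T hT)
    · intro _ T _ _ hT
      exact PhiIFAux.tor_subsingleton_of_subsingleton T M (htriv T hT)
  · intro H M _ _ hNI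
    refine (H M).mpr ?_
    intro T _ _ _ hT
    exact hNI T hT
end

section
/- Let R be a φ-ring. Then R is a φ-IF ring if and only if every R-module can be φ-embedded into a φ-flat module; that is, if and only if for every R-module M there exist a φ-flat R-module F and an injective R-linear map ι : M → F such that F/ι(M) is a φ-torsion module. -/
open CategoryTheory

universe u

section Aux
open Opposite
variable {R : Type u} [CommRing R]

lemma subsingleton_of_iso {A B : ModuleCat.{u} R} (e : A ≅ B) (h : Subsingleton A) :
    Subsingleton B := by
  constructor
  intro x y
  have hx : e.hom (e.inv x) = x := by
    calc e.hom (e.inv x) = (e.inv ≫ e.hom) x := rfl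
    _ = (𝟙 B) x := by rw [e.inv_hom_id]
    _ = x := rfl
  have hy : e.hom (e.inv y) = y := by
    calc e.hom (e.inv y) = (e.inv ≫ e.hom) y := rfl
    _ = (𝟙 B) y := by rw [e.inv_hom_id]
    _ = y := rfl
  rw [← hx, ← hy, Subsingleton.elim (e.inv x) (e.inv y)]

lemma subsingleton_iff_isZero (A : ModuleCat.{u} R) : Subsingleton A ↔ Limits.IsZero A := by
  constructor
  · intro h
    exact ModuleCat.isZero_of_subsingleton A
  · intro h
    constructor
    intro x y
    have h0 : (𝟙 A : A ⟶ A) = 0 := (Limits.IsZero.iff_id_eq_zero A).mp h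
    have hx : (𝟙 A : A ⟶ A) x = x := rfl
    have hy : (𝟙 A : A ⟶ A) y = y := rfl
    rw [← hx, ← hy, h0]
    rfl

example (T M : Type u) [AddCommGroup T] [Module R T]
    [AddCommGroup M] [Module R M] (P : ProjectiveResolution (ModuleCat.of R T))
    (h' :  (P.complex.linearYonedaObj R (ModuleCat.of R M)).X 0) :
    ((P.complex.linearYonedaObj R (ModuleCat.of R M)).sc' 0 1 2).f h' = P.complex.d 1 0 ≫ h' := rfl

example (T M : Type u) [AddCommGroup T] [Module R T]
    [AddCommGroup M] [Module R M] (P : ProjectiveResolution (ModuleCat.of R T))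
    (g :  (P.complex.linearYonedaObj R (ModuleCat.of R M)).X 1) :
    ((P.complex.linearYonedaObj R (ModuleCat.of R M)).sc' 0 1 2).g g = P.complex.d 2 1 ≫ g := rfl

lemma ext_one_subsingleton_iff (T M : Type u) [AddCommGroup T] [Module R T]
    [AddCommGroup M] [Module R M] (P : ProjectiveResolution (ModuleCat.of R T)) :
    Subsingleton (((Ext R (ModuleCat.{u} R) 1).obj (op (ModuleCat.of R T))).obj
        (ModuleCat.of R M)) ↔
      ∀ g : P.complex.X 1 ⟶ ModuleCat.of R M, P.complex.d 2 1 ≫ g = 0 →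
        ∃ h : P.complex.X 0 ⟶ ModuleCat.of R M, P.complex.d 1 0 ≫ h = g := by
  have e := P.isoExt (R := R) 1 (ModuleCat.of R M)
  set K := P.complex.linearYonedaObj R (ModuleCat.of R M) with hK
  have h1 : Subsingleton (((Ext R (ModuleCat.{u} R) 1).obj (op (ModuleCat.of R T))).obj
      (ModuleCat.of R M)) ↔ Subsingleton (K.homology 1) :=
    ⟨fun h => subsingleton_of_iso e h, fun h => subsingleton_of_iso e.symm h⟩
  rw [h1, subsingleton_iff_isZero, ← HomologicalComplex.exactAt_iff_isZero_homology,
    HomologicalComplex.exactAt_iff' K 0 1 2 (by simp) (by simp),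
    ShortComplex.moduleCat_exact_iff]
  exact ⟨fun h g hg => h g hg, fun h g hg => h g hg⟩
lemma phiTorsion_elt {T : Type u} [AddCommGroup T] [Module R T]
    (hT : IsPhiTorsion R T) (t : T) : ∃ a : R, a ∉ nilradical R ∧ a • t = 0 := by
  obtain ⟨I, hI, h⟩ := hT t
  obtain ⟨a, haI, ha⟩ := SetLike.not_le_iff_exists.mp hI
  exact ⟨a, ha, h a haI⟩

lemma phiTorsion_of_elt {T : Type u} [AddCommGroup T] [Module R T]
    (h : ∀ t : T, ∃ a : R, a ∉ nilradical R ∧ a • t = 0) : IsPhiTorsion R T := by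
  intro t
  obtain ⟨a, ha, hat⟩ := h t
  refine ⟨Ideal.span {a}, fun hle => ha (hle (Ideal.subset_span rfl)), fun b hb => ?_⟩
  obtain ⟨c, rfl⟩ := Ideal.mem_span_singleton'.mp hb
  rw [mul_smul, hat, smul_zero]

lemma forward_embed (hR : IsPhiRing R)
    (hIF : ∀ (M : Type u) [AddCommGroup M] [Module R M], IsNonnilInjective R M → IsPhiFlat R M)
    (M : Type u) [AddCommGroup M] [Module R M] :
    ∃ (F : Type u) (_ : AddCommGroup F) (_ : Module R F),
      IsPhiFlat R F ∧ ∃ ι : M →ₗ[R] F, Function.Injective ι ∧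
        IsPhiTorsion R (F ⧸ LinearMap.range ι) := by
  classical
  set E := Injective.under (ModuleCat.of R M) with hEdef
  let ι₁ : M →ₗ[R] E := (Injective.ι (ModuleCat.of R M)).hom
  have hι₁ : Function.Injective ι₁ :=
    (ModuleCat.mono_iff_injective (Injective.ι (ModuleCat.of R M))).mp inferInstance
  have hnil1 : (1 : R) ∉ nilradical R := fun h1 =>
    hR.1.ne_top ((Ideal.eq_top_iff_one _).mpr h1)
  let q1 : E →ₗ[R] (E ⧸ LinearMap.range ι₁) := (LinearMap.range ι₁).mkQ
  let tS : Submodule R (E ⧸ LinearMap.range ι₁) :=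
    { carrier := {y | ∃ a : R, a ∉ nilradical R ∧ a • y = 0}
      add_mem' := by
        rintro x y ⟨a, ha, hax⟩ ⟨b, hb, hby⟩
        refine ⟨a * b, fun h => ?_, ?_⟩
        · rcases hR.1.mem_or_mem h with h | h
          exacts [ha h, hb h]
        · have h1 : (a * b) • x = 0 := by rw [mul_comm, mul_smul, hax, smul_zero]
          have h2 : (a * b) • y = 0 := by rw [mul_smul, hby, smul_zero]
          rw [smul_add, h1, h2, add_zero]
      zero_mem' := ⟨1, hnil1, smul_zero 1⟩
      smul_mem' := by
        rintro c x ⟨a, ha, hax⟩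
        exact ⟨a, ha, by rw [smul_comm, hax, smul_zero]⟩ }
  let Fsub : Submodule R E := Submodule.comap q1 tS
  let ι : M →ₗ[R] Fsub := ι₁.codRestrict Fsub (fun m => by
    show q1 (ι₁ m) ∈ tS
    have h0 : q1 (ι₁ m) = 0 := (Submodule.Quotient.mk_eq_zero _).mpr ⟨m, rfl⟩
    rw [h0]; exact tS.zero_mem)
  have hinj : Function.Injective ι := fun a b h => hι₁ (congrArg Subtype.val h)
  have htor : IsPhiTorsion R (Fsub ⧸ LinearMap.range ι) := by
    apply phiTorsion_of_elt
    intro t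
    obtain ⟨x, rfl⟩ := Submodule.mkQ_surjective _ t
    obtain ⟨a, ha, haq⟩ := x.2
    have hmem : a • (x : E) ∈ LinearMap.range ι₁ := by
      have h0 : q1 (a • (x : E)) = 0 := by rw [map_smul, haq]
      exact (Submodule.Quotient.mk_eq_zero _).mp h0
    obtain ⟨m, hm⟩ := hmem
    refine ⟨a, ha, ?_⟩
    have hmem2 : a • x ∈ LinearMap.range ι := ⟨m, Subtype.ext hm⟩
    rw [← map_smul, Submodule.mkQ_apply, Submodule.Quotient.mk_eq_zero]
    exact hmem2
  have hEInj : Module.Injective R E :=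
    Module.injective_module_of_injective_object R E
      (inj := inferInstanceAs (CategoryTheory.Injective E))
  have hni : IsNonnilInjective R Fsub := by
    intro T _ _ hT
    obtain ⟨P⟩ : Nonempty (ProjectiveResolution (ModuleCat.of R T)) :=
      HasProjectiveResolution.out
    rw [ext_one_subsingleton_iff T Fsub P]
    intro g hg
    let d10 : P.complex.X 1 →ₗ[R] P.complex.X 0 := (P.complex.d 1 0).hom
    let g' : P.complex.X 1 →ₗ[R] E := Fsub.subtype ∘ₗ (g.hom : P.complex.X 1 →ₗ[R] Fsub)
    have hex1 := P.exact_succ 0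
    rw [ShortComplex.moduleCat_exact_iff] at hex1
    have hker : ∀ x : P.complex.X 1, d10 x = 0 → g' x = 0 := by
      intro x hx
      obtain ⟨y, rfl⟩ := hex1 x hx
      show Fsub.subtype (g (P.complex.d 2 1 y)) = 0
      have h0 : g (P.complex.d 2 1 y) = (P.complex.d 2 1 ≫ g) y := rfl
      rw [h0, hg]
      exact map_zero Fsub.subtype
    let e1 : (P.complex.X 1 ⧸ LinearMap.ker d10) →ₗ[R] E :=
      (LinearMap.ker d10).liftQ g' (fun x hx => hker x hx)
    let k1 := d10.quotKerEquivRange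
    let w : LinearMap.range d10 →ₗ[R] E := e1 ∘ₗ (k1.symm : _ →ₗ[R] _)
    obtain ⟨h, hh⟩ := hEInj.out (LinearMap.range d10).subtype
      (Submodule.injective_subtype _) w
    have hhd : ∀ x : P.complex.X 1, h (d10 x) = g' x := by
      intro x
      have h1 : h (d10 x) = h ((LinearMap.range d10).subtype ⟨d10 x, ⟨x, rfl⟩⟩) := rfl
      rw [h1, hh]
      have h2 : k1.symm ⟨d10 x, ⟨x, rfl⟩⟩ = Submodule.Quotient.mk x := by
        apply k1.injective
        rw [k1.apply_symm_apply]
        exact Subtype.ext (d10.quotKerEquivRange_apply_mk x).symm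
      show e1 (k1.symm ⟨d10 x, ⟨x, rfl⟩⟩) = g' x
      rw [h2]
      exact Submodule.liftQ_apply _ _ _
    let q' : E →ₗ[R] ((E ⧸ LinearMap.range ι₁) ⧸ tS) := tS.mkQ ∘ₗ q1
    have hq'ker : ∀ x : E, q' x = 0 ↔ x ∈ Fsub := by
      intro x
      show tS.mkQ (q1 x) = 0 ↔ _
      rw [Submodule.mkQ_apply, Submodule.Quotient.mk_eq_zero]
      exact Iff.rfl
    have hQtf : ∀ (y : (E ⧸ LinearMap.range ι₁) ⧸ tS) (a : R),
        a ∉ nilradical R → a • y = 0 → y = 0 := by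
      intro y a ha hay
      obtain ⟨z, rfl⟩ := Submodule.mkQ_surjective _ y
      rw [Submodule.mkQ_apply] at hay ⊢
      rw [← Submodule.Quotient.mk_smul, Submodule.Quotient.mk_eq_zero] at hay
      rw [Submodule.Quotient.mk_eq_zero]
      obtain ⟨b, hb, hbz⟩ := hay
      refine ⟨b * a, fun hmem => ?_, by rw [mul_smul]; exact hbz⟩
      rcases hR.1.mem_or_mem hmem with h | h
      exacts [hb h, ha h]
    have hq'h : ∀ x : P.complex.X 0, q' (h x) = 0 := by
      intro x
      obtain ⟨a, ha, hat⟩ := phiTorsion_elt hT (P.π.f 0 x)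
      have hax : (P.π.f 0) (a • x) = 0 := by rw [map_smul]; exact hat
      have hex0 := P.exact₀
      rw [ShortComplex.moduleCat_exact_iff] at hex0
      obtain ⟨y, hy⟩ := hex0 (a • x) hax
      have h1 : q' (h (a • x)) = 0 := by
        rw [← (show d10 y = a • x from hy), hhd]
        exact (hq'ker _).mpr (g y).2
      have h2 : a • q' (h x) = 0 := by
        rw [← map_smul, ← map_smul]
        exact h1
      exact hQtf _ a ha h2
    refine ⟨ModuleCat.ofHom (h.codRestrict Fsub (fun x => (hq'ker _).mp (hq'h x))), ?_⟩
    apply ModuleCat.hom_ext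
    apply LinearMap.ext
    intro x
    apply Subtype.ext
    exact hhd x
  exact ⟨Fsub, inferInstance, inferInstance, hIF Fsub hni, ι, hinj, htor⟩

lemma reverse_retract {M F : Type u} [AddCommGroup M] [Module R M] [AddCommGroup F] [Module R F]
    (ι : M →ₗ[R] F) (r : F →ₗ[R] M) (hr : ∀ m, r (ι m) = m)
    {T : Type u} [AddCommGroup T] [Module R T]
    (hsub : Subsingleton (((Tor (ModuleCat.{u} R) 1).obj (ModuleCat.of R T)).obj
      (ModuleCat.of R F))) :
    Subsingleton (((Tor (ModuleCat.{u} R) 1).obj (ModuleCat.of R T)).obj (ModuleCat.of R M)) := by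
  let G := (Tor (ModuleCat.{u} R) 1).obj (ModuleCat.of R T)
  let i : ModuleCat.of R M ⟶ ModuleCat.of R F := ModuleCat.ofHom ι
  let p : ModuleCat.of R F ⟶ ModuleCat.of R M := ModuleCat.ofHom r
  have hip : i ≫ p = 𝟙 (ModuleCat.of R M) := ModuleCat.hom_ext (LinearMap.ext hr)
  have hGip : G.map i ≫ G.map p = 𝟙 (G.obj (ModuleCat.of R M)) := by
    rw [← G.map_comp, hip, G.map_id]
  constructor
  intro x y
  have hx : (G.map i ≫ G.map p) x = x := by rw [hGip]; rfl
  have hy : (G.map i ≫ G.map p) y = y := by rw [hGip]; rfl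
  have hxy : G.map i x = G.map i y := Subsingleton.elim _ _
  rw [← hx, ← hy]
  show G.map p (G.map i x) = G.map p (G.map i y)
  rw [hxy]

lemma reverse_dir (hR : IsPhiRing R)
    (hemb : ∀ (M : Type u) [AddCommGroup M] [Module R M],
      ∃ (F : Type u) (_ : AddCommGroup F) (_ : Module R F),
        IsPhiFlat R F ∧ ∃ ι : M →ₗ[R] F, Function.Injective ι ∧
          IsPhiTorsion R (F ⧸ LinearMap.range ι))
    (M : Type u) [AddCommGroup M] [Module R M] (hM : IsNonnilInjective R M) :
    IsPhiFlat R M := by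
  classical
  obtain ⟨F, _, _, hF, ι, hιinj, htor⟩ := hemb M
  -- set up the splitting
  have hExt := hM (F ⧸ LinearMap.range ι) htor
  obtain ⟨P⟩ : Nonempty (ProjectiveResolution (ModuleCat.of R (F ⧸ LinearMap.range ι))) :=
    HasProjectiveResolution.out
  rw [ext_one_subsingleton_iff (F ⧸ LinearMap.range ι) M P] at hExt
  let pc : ModuleCat.of R F ⟶ ModuleCat.of R (F ⧸ LinearMap.range ι) :=
    ModuleCat.ofHom (LinearMap.range ι).mkQ
  have hpc : Epi pc := (ModuleCat.epi_iff_surjective pc).mpr (Submodule.mkQ_surjective _)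
  have hεs : Function.Surjective (P.π.f 0) :=
    (ModuleCat.epi_iff_surjective (P.π.f 0)).mp inferInstance
  let f₀ : P.complex.X 0 ⟶ ModuleCat.of R F := Projective.factorThru (X := ModuleCat.of R (F ⧸ LinearMap.range ι)) (P.π.f 0) pc
  have hf₀ : f₀ ≫ pc = P.π.f 0 := Projective.factorThru_comp (X := ModuleCat.of R (F ⧸ LinearMap.range ι)) (P.π.f 0) pc
  let f₀' : ↑(P.complex.X 0) →ₗ[R] F := f₀.hom
  let εl : ↑(P.complex.X 0) →ₗ[R] (F ⧸ LinearMap.range ι) := (P.π.f 0).hom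
  let eι : M ≃ₗ[R] LinearMap.range ι := LinearEquiv.ofInjective ι hιinj
  let d10 : P.complex.X 1 →ₗ[R] P.complex.X 0 := (P.complex.d 1 0).hom
  let g0 : P.complex.X 1 →ₗ[R] F := f₀' ∘ₗ d10
  have hg0mem : ∀ x, g0 x ∈ LinearMap.range ι := by
    intro x
    have h1 : (LinearMap.range ι).mkQ (g0 x) = 0 := by
      have h2 : (LinearMap.range ι).mkQ (g0 x) = (P.complex.d 1 0 ≫ (f₀ ≫ pc)) x := rfl
      have h3 : P.complex.d 1 0 ≫ (f₀ ≫ pc) = 0 := by rw [hf₀]; exact P.complex_d_comp_π_f_zero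
      rw [h2, h3]
      rfl
    rw [Submodule.mkQ_apply, Submodule.Quotient.mk_eq_zero] at h1
    exact h1
  let g : P.complex.X 1 →ₗ[R] M :=
    (eι.symm : LinearMap.range ι →ₗ[R] M) ∘ₗ (g0.codRestrict (LinearMap.range ι) hg0mem)
  have hgspec : ∀ x, ι (g x) = g0 x := by
    intro x
    show ι (eι.symm ⟨g0 x, hg0mem x⟩) = g0 x
    have h1 : ∀ y : LinearMap.range ι, ι (eι.symm y) = y := by
      intro y
      have h2 : (eι (eι.symm y) : F) = y := by rw [eι.apply_symm_apply]
      rwa [LinearEquiv.ofInjective_apply] at h2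
    exact h1 _
  let gm : P.complex.X 1 ⟶ ModuleCat.of R M := ModuleCat.ofHom g
  have hcocycle : P.complex.d 2 1 ≫ gm = 0 := by
    apply ModuleCat.hom_ext
    apply LinearMap.ext
    intro y
    apply hιinj
    show ι (g (P.complex.d 2 1 y)) = ι ((0 : P.complex.X 2 ⟶ ModuleCat.of R M) y)
    rw [hgspec]
    have h2 : g0 ((P.complex.d 2 1) y) = f₀'
        ((P.complex.d 2 1 ≫ P.complex.d 1 0) y) := rfl
    rw [h2, HomologicalComplex.d_comp_d]
    show f₀' ((0 : P.complex.X 2 ⟶ P.complex.X 0) y) = ι 0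
    have h3 : (0 : P.complex.X 2 ⟶ P.complex.X 0) y = 0 := rfl
    rw [h3, map_zero, map_zero]
  obtain ⟨h, hh⟩ := hExt gm hcocycle
  let h' : ↑(P.complex.X 0) →ₗ[R] M := h.hom
  have hhd : ∀ x, h' (d10 x) = g x := fun x =>
    congrArg (fun f : P.complex.X 1 ⟶ ModuleCat.of R M => f x) hh
  let s₀ : ↑(P.complex.X 0) →ₗ[R] F := f₀' - ι ∘ₗ h'
  have hs₀d : ∀ y, s₀ (d10 y) = 0 := by
    intro y
    show f₀' (d10 y) - ι (h' (d10 y)) = 0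
    rw [hhd, hgspec]
    exact sub_self _
  have hex0 := P.exact₀
  rw [ShortComplex.moduleCat_exact_iff] at hex0
  have hkerle : LinearMap.ker εl ≤ LinearMap.ker s₀ := by
    intro z hz
    obtain ⟨y, hy⟩ := hex0 z hz
    have : z = d10 y := hy.symm
    rw [LinearMap.mem_ker, this, hs₀d]
  let sbar := (LinearMap.ker εl).liftQ s₀ hkerle
  let kε := LinearMap.quotKerEquivOfSurjective εl hεs
  let s : (F ⧸ LinearMap.range ι) →ₗ[R] F := sbar ∘ₗ (kε.symm : _ →ₗ[R] _)
  have hs : ∀ x : P.complex.X 0, s (P.π.f 0 x) = s₀ x := by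
    intro x
    have h1 : kε.symm (P.π.f 0 x) = Submodule.Quotient.mk x := by
      apply kε.injective
      refine (kε.apply_symm_apply _).trans ?_
      rfl
    show sbar (kε.symm (P.π.f 0 x)) = s₀ x
    rw [h1]
    exact Submodule.liftQ_apply _ _ _
  have hπs : ∀ c, (LinearMap.range ι).mkQ (s c) = c := by
    intro c
    obtain ⟨x, rfl⟩ := hεs c
    rw [hs]
    show (LinearMap.range ι).mkQ (f₀' x - ι (h' x)) = P.π.f 0 x
    rw [map_sub]
    have h1 : (LinearMap.range ι).mkQ (ι (h' x)) = 0 := by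
      rw [Submodule.mkQ_apply, Submodule.Quotient.mk_eq_zero]
      exact ⟨h x, rfl⟩
    have h2 : (LinearMap.range ι).mkQ (f₀' x) = P.π.f 0 x :=
      congrArg (fun f : P.complex.X 0 ⟶ ModuleCat.of R (F ⧸ LinearMap.range ι) => f x) hf₀
    rw [h1, h2]; exact sub_zero _
  have hrmem : ∀ x : F, x - s ((LinearMap.range ι).mkQ x) ∈ LinearMap.range ι := by
    intro x
    have h1 : (LinearMap.range ι).mkQ (x - s ((LinearMap.range ι).mkQ x)) = 0 := by
      rw [map_sub, hπs, sub_self]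
    rwa [Submodule.mkQ_apply, Submodule.Quotient.mk_eq_zero] at h1
  let r : F →ₗ[R] M := (eι.symm : LinearMap.range ι →ₗ[R] M) ∘ₗ
    ((LinearMap.id - s ∘ₗ (LinearMap.range ι).mkQ).codRestrict (LinearMap.range ι) hrmem)
  have hrι : ∀ m, r (ι m) = m := by
    intro m
    have h1 : (LinearMap.range ι).mkQ (ι m) = 0 := by
      rw [Submodule.mkQ_apply, Submodule.Quotient.mk_eq_zero]
      exact ⟨m, rfl⟩
    show eι.symm ⟨ι m - s ((LinearMap.range ι).mkQ (ι m)), _⟩ = m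
    have h2 : ι m - s ((LinearMap.range ι).mkQ (ι m)) = ι m := by
      rw [h1, map_zero, sub_zero]
    rw [eι.symm_apply_eq]
    apply Subtype.ext
    rw [LinearEquiv.ofInjective_apply]
    exact h2
  intro T _ _ hT
  exact reverse_retract ι r hrι (hF T hT)

end Aux

/-- A φ-ring `R` is a φ-IF ring if and only if every `R`-module can be
φ-embedded into a φ-flat module, i.e. for every `M` there are a φ-flat module `F` and an
injective linear map `ι : M → F` with `F/ι(M)` φ-torsion. -/
theorem phiIF_iff_phiEmbedding_into_phiFlat (R : Type u) [CommRing R]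
    (hR : IsPhiRing R) :
    (∀ (M : Type u) [AddCommGroup M] [Module R M],
        IsNonnilInjective R M → IsPhiFlat R M) ↔
      ∀ (M : Type u) [AddCommGroup M] [Module R M],
        ∃ (F : Type u) (_ : AddCommGroup F) (_ : Module R F),
          IsPhiFlat R F ∧
            ∃ ι : M →ₗ[R] F, Function.Injective ι ∧
              IsPhiTorsion R (F ⧸ LinearMap.range ι) := by
  constructor
  · intro hIF M _ _
    exact forward_embed hR hIF M
  · intro hemb M _ _ hM
    exact reverse_dir hR hemb M hM
end

section
/- Let R be a strongly φ-ring (a φ-ring in which the set of zero-divisors equals Nil(R)). If R is an IF ring (every injective R-module is flat), then R is a φ-IF ring. -/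
open CategoryTheory

universe u

open CategoryTheory CategoryTheory.Limits in
lemma subsingleton_tor_of_subsingleton' (R : Type u) [CommRing R]
    (T : Type u) [AddCommGroup T] [Module R T] [Subsingleton T] (W : ModuleCat.{u} R) :
    Subsingleton (((Tor (ModuleCat.{u} R) 1).obj (ModuleCat.of R T)).obj W) := by
  let F := (MonoidalCategory.tensoringLeft (ModuleCat.{u} R)).obj (ModuleCat.of R T)
  let P : ProjectiveResolution W := (HasProjectiveResolution.out (Z := W)).some
  let K := (F.mapHomologicalComplex (ComplexShape.down ℕ)).obj P.complex
  have hK : IsZero (K.X 1) := by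
    have : Subsingleton (K.X 1) :=
      inferInstanceAs (Subsingleton (TensorProduct R T (P.complex.X 1)))
    exact ModuleCat.isZero_of_subsingleton _
  have hhom : IsZero (K.homology 1) :=
    ShortComplex.isZero_homology_of_isZero_X₂ (S := K.sc 1) hK
  have h3 : IsZero ((F.leftDerived 1).obj W) :=
    hhom.of_iso (P.isoLeftDerivedObj F 1)
  have h0 : (𝟙 ((F.leftDerived 1).obj W) : _ ⟶ _) = 0 := h3.eq_of_src _ _
  show Subsingleton ((F.leftDerived 1).obj W)
  refine ⟨fun a b => ?_⟩
  calc a = (𝟙 ((F.leftDerived 1).obj W) : _ ⟶ _) a := rfl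
    _ = (0 : (F.leftDerived 1).obj W ⟶ _) a := by rw [h0]
    _ = 0 := rfl
    _ = (0 : (F.leftDerived 1).obj W ⟶ _) b := rfl
    _ = (𝟙 ((F.leftDerived 1).obj W) : _ ⟶ _) b := by rw [h0]
    _ = b := rfl

/-- Let `R` be a strongly φ-ring (a φ-ring whose zero-divisors are
exactly the nilpotent elements). If `R` is an IF ring (every injective module is flat),
then `R` is a φ-IF ring. -/
theorem phiIF_of_IF_of_stronglyPhiRing (R : Type u) [CommRing R] (hR : IsPhiRing R)
    (hZN : ∀ r : R, (∃ s : R, s ≠ 0 ∧ r * s = 0) ↔ r ∈ nilradical R)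
    (hIF : ∀ (M : Type u) [AddCommGroup M] [Module R M],
      Module.Injective R M → Module.Flat R M) :
    ∀ (M : Type u) [AddCommGroup M] [Module R M],
      IsNonnilInjective R M → IsPhiFlat R M := by
  intro M _ _ _hM T _ _ hT
  have hunit : ∀ x : R, x ∉ nilradical R → IsUnit x := by
    intro x hx
    by_contra hxu
    have hreg : IsSMulRegular R x := by
      intro a b hab
      simp only [smul_eq_mul] at hab
      by_contra hne
      exact hx ((hZN x).mp ⟨a - b, sub_ne_zero.mpr hne, by rw [mul_sub, hab, sub_self]⟩)
    have htop : Ideal.span {x} ≠ ⊤ := fun h => hxu (Ideal.span_singleton_eq_top.mp h)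
    set N := R ⧸ Ideal.span {x} with hN
    have hone : (Ideal.Quotient.mk (Ideal.span {x}) 1 : N) ≠ 0 := by
      simpa using (Ideal.Quotient.zero_ne_one_iff.mpr htop).symm
    let J : ModuleCat.{u} R := Injective.under (ModuleCat.of R N)
    haveI : CategoryTheory.Injective (ModuleCat.of R J) := by
      rw [ModuleCat.of_coe]; infer_instance
    have hJinj : Module.Injective R J := Module.injective_module_of_injective_object R J
    haveI hJflat : Module.Flat R J := hIF J hJinj
    have hregJ : IsSMulRegular J x :=
      ((TensorProduct.rid R J).isSMulRegular_congr x).mp (hreg.lTensor (J : Type u))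
    let ι := CategoryTheory.Injective.ι (ModuleCat.of R N)
    have hι : Function.Injective ι := (ModuleCat.mono_iff_injective ι).mp inferInstance
    have hx0 : x • (Ideal.Quotient.mk (Ideal.span {x}) 1 : N) = 0 := by
      have h1 : (Ideal.Quotient.mk (Ideal.span {x})) x = 0 :=
        Ideal.Quotient.eq_zero_iff_mem.mpr (Ideal.mem_span_singleton_self x)
      calc x • (Ideal.Quotient.mk (Ideal.span {x}) 1 : N)
          = (Ideal.Quotient.mk (Ideal.span {x}) (x * 1) : N) := rfl
        _ = 0 := by rw [mul_one, h1]
    have h2 : ι (Ideal.Quotient.mk (Ideal.span {x}) 1 : N) = 0 := by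
      apply hregJ
      show x • ι _ = x • (0 : J)
      rw [← map_smul, hx0, map_zero, smul_zero]
    exact hone (hι (by rw [h2, map_zero]))
  haveI : Subsingleton T := by
    have hzero : ∀ t : T, t = 0 := by
      intro t
      obtain ⟨I, hI, hann⟩ := hT t
      obtain ⟨a, haI, ha⟩ := SetLike.not_le_iff_exists.mp hI
      obtain ⟨v, hv⟩ := hunit a ha
      calc t = ((↑v⁻¹ * ↑v : R)) • t := by rw [v.inv_mul, one_smul]
        _ = (↑v⁻¹ : R) • ((↑v : R) • t) := by rw [mul_smul]
        _ = (↑v⁻¹ : R) • (0 : T) := by rw [show ((↑v : R) • t) = 0 from hv ▸ hann a haI]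
        _ = 0 := smul_zero _
    exact ⟨fun s t => by rw [hzero s, hzero t]⟩
  exact subsingleton_tor_of_subsingleton' R T (ModuleCat.of R M)
end

section
/- Let K be a field, V = ∏_{i=1}^∞ K (a countably infinite product of copies of K as a K-module), and R = K(+)V the idealization. Then R is a φ-ring, R is a φ-IF ring (every nonnil-injective R-module is φ-flat), and R is not a coherent ring (indeed, for the vector v ∈ V with all components equal to 1, the annihilator (0 :_R (0,v)) = 0(+)V is a non-finitely-generated ideal of R); in particular R is not an IF ring. -/
open CategoryTheory

universe u

/-! ### Auxiliary material -/

section TorAux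
open CategoryTheory.Limits
variable {R : Type u} [CommRing R]

variable {R : Type u} [CommRing R]

lemma isZero_leftDerived_obj_of_isZero (F : ModuleCat.{u} R ⥤ ModuleCat.{u} R) [F.Additive]
    (hF : ∀ Y, IsZero (F.obj Y)) (n : ℕ) (M : ModuleCat.{u} R) :
    IsZero ((F.leftDerived n).obj M) := by
  have P : ProjectiveResolution M := (HasProjectiveResolution.out (Z := M)).some
  refine IsZero.of_iso ?_ (P.isoLeftDerivedObj F n)
  erw [← HomologicalComplex.exactAt_iff_isZero_homology]
  exact ShortComplex.exact_of_isZero_X₂ _ (hF _)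

lemma subsingleton_of_isZero {M : ModuleCat.{u} R} (h : IsZero M) : Subsingleton M := by
  have : (𝟙 M : M ⟶ M) = 0 := h.eq_of_src _ _
  constructor
  intro a b
  calc a = (𝟙 M : M ⟶ M) a := rfl
    _ = (0 : M ⟶ M) a := by rw [this]
    _ = (𝟙 M : M ⟶ M) b := by rw [this]; rfl
    _ = b := rfl

lemma tor_subsingleton (T M : Type u) [AddCommGroup T] [Module R T]
    [AddCommGroup M] [Module R M] [Subsingleton T] :
    Subsingleton (((Tor (ModuleCat.{u} R) 1).obj (ModuleCat.of R T)).obj (ModuleCat.of R M)) := by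
  apply subsingleton_of_isZero
  show IsZero ((Functor.leftDerived ((MonoidalCategory.tensoringLeft _).obj (ModuleCat.of R T)) 1).obj (ModuleCat.of R M))
  apply isZero_leftDerived_obj_of_isZero
  intro Y
  haveI : Subsingleton (((MonoidalCategory.tensoringLeft (ModuleCat R)).obj (ModuleCat.of R T)).obj Y) :=
    inferInstanceAs (Subsingleton (TensorProduct R T Y))
  apply ModuleCat.isZero_of_subsingleton

end TorAux

section RingAux
open TrivSqZeroExt
variable {K : Type u} [Field K]

variable {K : Type u} [Field K]

theorem mem_nil_iff (x : TrivSqZeroExt K (ℕ → K)) :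
    x ∈ nilradical (TrivSqZeroExt K (ℕ → K)) ↔ x.fst = 0 := by
  rw [mem_nilradical]
  constructor
  · rintro ⟨n, hn⟩
    have h : x.fst ^ n = 0 := by rw [← fst_pow, hn, fst_zero]
    exact (pow_eq_zero_iff'.mp h).1
  · intro h
    refine ⟨2, ?_⟩
    have hx : x = inr x.snd := by ext <;> simp [h]
    rw [hx, pow_two, inr_mul_inr]

theorem phiRing : (nilradical (TrivSqZeroExt K (ℕ → K))).IsPrime ∧
    ∀ x : TrivSqZeroExt K (ℕ → K), x ∉ nilradical (TrivSqZeroExt K (ℕ → K)) →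
      nilradical (TrivSqZeroExt K (ℕ → K)) ≤ Ideal.span {x} := by
  constructor
  · constructor
    · intro h
      have : (1 : TrivSqZeroExt K (ℕ → K)) ∈ nilradical _ := h ▸ Submodule.mem_top
      rw [mem_nil_iff] at this
      simp at this
    · intro x y hxy
      rw [mem_nil_iff] at hxy ⊢
      rw [mem_nil_iff]
      rw [fst_mul] at hxy
      exact mul_eq_zero.mp hxy
  · intro x hx
    have : IsUnit x := by
      rw [isUnit_iff_isUnit_fst, isUnit_iff_ne_zero]
      rw [mem_nil_iff] at hx
      exact hx
    rw [Ideal.span_singleton_eq_top.mpr this]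
    exact le_top


variable {K : Type u} [Field K]

section GNotation
local notation "g" => (inr (fun _ => 1) : TrivSqZeroExt K (ℕ → K))

lemma mul_g_eq_zero_iff (x : TrivSqZeroExt K (ℕ → K)) : x * g = 0 ↔ x.fst = 0 := by
  constructor
  · intro h
    have h2 : (x * g).snd = 0 := by rw [h]; rfl
    rw [snd_mul] at h2
    simp only [snd_inr, fst_inr, MulOpposite.op_zero, zero_smul, add_zero] at h2
    have := congrFun h2 0
    simpa using this
  · intro h
    have : x = inr x.snd := by ext <;> simp [h]
    rw [this, inr_mul_inr]

lemma colon_eq :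
    (Submodule.colon (⊥ : Ideal (TrivSqZeroExt K (ℕ → K)))
        (Ideal.span {g}) : Set (TrivSqZeroExt K (ℕ → K))) =
      {x : TrivSqZeroExt K (ℕ → K) | x.fst = 0} := by
  ext x
  simp only [SetLike.mem_coe, Submodule.mem_colon, Set.mem_setOf_eq]
  constructor
  · intro h
    have := h g (Ideal.mem_span_singleton_self _)
    rw [Submodule.mem_bot] at this
    rw [← mul_g_eq_zero_iff]
    exact this
  · intro h p hp
    rw [Submodule.mem_bot]
    obtain ⟨a, rfl⟩ := Ideal.mem_span_singleton'.mp hp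
    have hx : x * g = 0 := (mul_g_eq_zero_iff x).mpr h
    rw [smul_eq_mul, mul_left_comm, hx, mul_zero]

lemma indep_single : LinearIndependent K (fun i : ℕ => (Pi.single i (1:K) : ℕ → K)) := by
  rw [linearIndependent_iff']
  intro s f h i hi
  have := congrFun h i
  simp only [Finset.sum_apply, Pi.smul_apply, Pi.zero_apply] at this
  rwa [Finset.sum_eq_single i (fun j _ hj => by simp [Pi.single_apply, hj]) (fun h => absurd hi h),
    Pi.single_eq_same, smul_eq_mul, mul_one] at this

set_option maxHeartbeats 1000000 in
lemma colon_not_fg :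
    ¬ (Submodule.colon (⊥ : Ideal (TrivSqZeroExt K (ℕ → K)))
        (Ideal.span {g})).FG := by
  classical
  intro hfg
  obtain ⟨S, hS⟩ := hfg
  -- snd of everything in the colon ideal lies in the K-span of snd '' S
  have hmem : ∀ x ∈ Submodule.colon (⊥ : Ideal (TrivSqZeroExt K (ℕ → K))) (Ideal.span {g}),
      x.snd ∈ Submodule.span K (TrivSqZeroExt.snd '' (S : Set (TrivSqZeroExt K (ℕ → K)))) := by
    intro x hx
    rw [← hS] at hx
    induction hx using Submodule.span_induction with
    | mem y hy => exact Submodule.subset_span ⟨y, hy, rfl⟩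
    | zero => simp
    | add y z _ _ hy hz => rw [snd_add]; exact Submodule.add_mem _ hy hz
    | smul r y hy ih =>
        have hy' : y.fst = 0 := by
          have : y ∈ Submodule.colon (⊥ : Ideal (TrivSqZeroExt K (ℕ → K))) (Ideal.span {g}) :=
            hS ▸ hy
          have := Set.ext_iff.mp colon_eq y |>.mp this
          exact this
        have : (r • y).snd = r.fst • y.snd := by
          rw [smul_eq_mul, snd_mul, hy', MulOpposite.op_zero, zero_smul, add_zero]
        rw [this]
        exact Submodule.smul_mem _ _ ih
  -- hence ℕ → K is a finite-dimensional K-module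
  have htop : (⊤ : Submodule K (ℕ → K)) ≤
      Submodule.span K (TrivSqZeroExt.snd '' (S : Set (TrivSqZeroExt K (ℕ → K)))) := by
    intro m _
    have hmJ : (inr m : TrivSqZeroExt K (ℕ → K)) ∈
        Submodule.colon (⊥ : Ideal (TrivSqZeroExt K (ℕ → K))) (Ideal.span {g}) := by
      have := Set.ext_iff.mp colon_eq (inr m) |>.mpr (by simp)
      exact this
    simpa using hmem _ hmJ
  have hfin : Module.Finite K (ℕ → K) := by
    refine ⟨⟨S.image TrivSqZeroExt.snd, ?_⟩⟩
    rw [Finset.coe_image]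
    exact le_antisymm le_top htop
  haveI := hfin
  exact Module.Finite.not_linearIndependent_of_infinite (R := K) (M := (ℕ → K))
    (fun i : ℕ => (Pi.single i (1:K) : ℕ → K)) indep_single

lemma not_coherent :
    ¬ (∀ I : Ideal (TrivSqZeroExt K (ℕ → K)), I.FG →
        Module.FinitePresentation (TrivSqZeroExt K (ℕ → K)) I) := by
  intro h
  set R' := TrivSqZeroExt K (ℕ → K)
  have hIfg : (Ideal.span {g} : Ideal R').FG := ⟨{g}, by simp⟩
  haveI hfp := h _ hIfg
  set π : R' →ₗ[R'] (Ideal.span {g} : Ideal R') :=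
    LinearMap.toSpanSingleton R' _ ⟨g, Ideal.mem_span_singleton_self _⟩ with hπ
  have hsurj : Function.Surjective π := by
    rintro ⟨y, hy⟩
    obtain ⟨a, ha⟩ := Ideal.mem_span_singleton'.mp hy
    exact ⟨a, Subtype.ext (by simpa [π, LinearMap.toSpanSingleton_apply, Submodule.coe_smul,
      smul_eq_mul] using ha)⟩
  have hker : LinearMap.ker π = Submodule.colon (⊥ : Ideal R') (Ideal.span {g}) := by
    ext r
    rw [LinearMap.mem_ker]
    constructor
    · intro hr
      have : r * g = 0 := by
        have := congrArg Subtype.val hr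
        simpa [π, LinearMap.toSpanSingleton_apply, smul_eq_mul] using this
      rw [Submodule.mem_colon]
      intro p hp
      obtain ⟨a, rfl⟩ := Ideal.mem_span_singleton'.mp hp
      rw [Submodule.mem_bot, smul_eq_mul, mul_left_comm, this, mul_zero]
    · intro hr
      have := Submodule.mem_colon.mp hr g (Ideal.mem_span_singleton_self _)
      rw [Submodule.mem_bot, smul_eq_mul] at this
      exact Subtype.ext (by simpa [π, LinearMap.toSpanSingleton_apply, smul_eq_mul] using this)
  have := Module.FinitePresentation.fg_ker π hsurj
  rw [hker] at this
  exact colon_not_fg this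

end GNotation


variable (K : Type u) [Field K]

def MDual : Type u := TrivSqZeroExt K (ℕ → K) →ₗ[K] K

instance : AddCommGroup (MDual K) :=
  inferInstanceAs (AddCommGroup (TrivSqZeroExt K (ℕ → K) →ₗ[K] K))

variable {K}

def MDual.toLin (f : MDual K) : TrivSqZeroExt K (ℕ → K) →ₗ[K] K := f

def MDual.app (f : MDual K) (x : TrivSqZeroExt K (ℕ → K)) : K :=
  f.toLin x

@[ext] lemma MDual.ext {f h : MDual K} (H : ∀ x, f.app x = h.app x) : f = h :=
  LinearMap.ext H

lemma MDual.app_add (f h : MDual K) (x) : (f + h).app x = f.app x + h.app x := rfl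
lemma MDual.add_app (f : MDual K) (x y) : f.app (x + y) = f.app x + f.app y :=
  f.toLin.map_add x y
lemma MDual.app_smul (f : MDual K) (k : K) (x) : f.app (k • x) = k * f.app x :=
  f.toLin.map_smul k x
lemma MDual.zero_app (f : MDual K) : f.app 0 = 0 := f.toLin.map_zero

variable (K) in
def MDual.mk (f : TrivSqZeroExt K (ℕ → K) →ₗ[K] K) : MDual K := f

lemma MDual.mk_app (f) (x) : (MDual.mk K f).app x = f x := rfl

instance : Module (TrivSqZeroExt K (ℕ → K)) (MDual K) where
  smul r f := MDual.mk K (f.toLin.comp (LinearMap.mulLeft K r))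
  one_smul f := MDual.ext fun x => by
    show f.app (1 * x) = f.app x
    rw [one_mul]
  mul_smul r s f := MDual.ext fun x => by
    show f.app ((r * s) * x) = f.app (s * (r * x))
    rw [mul_left_comm, mul_assoc]
  smul_zero r := MDual.ext fun x => rfl
  smul_add r f h := MDual.ext fun x => rfl
  add_smul r s f := MDual.ext fun x => by
    show f.app ((r + s) * x) = f.app (r * x) + f.app (s * x)
    rw [add_mul, MDual.add_app]
  zero_smul f := MDual.ext fun x => by
    show f.app (0 * x) = (0 : MDual K).app x
    rw [zero_mul]
    exact f.toLin.map_zero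

lemma MDual.smul_app (r : TrivSqZeroExt K (ℕ → K)) (f : MDual K) (x) :
    (r • f).app x = f.app (r * x) := rfl

lemma inl_eq_smul_one (k : K) : (inl k : TrivSqZeroExt K (ℕ → K)) = k • 1 := by
  ext
  · rw [fst_inl, fst_smul, fst_one, smul_eq_mul, mul_one]
  · rw [snd_inl, snd_smul, snd_one, smul_zero]

theorem mdual_injective : Module.Injective (TrivSqZeroExt K (ℕ → K)) (MDual K) := by
  constructor
  intro X Y _ _ _ _ f hf g
  letI : Module K X := Module.compHom X (algebraMap K (TrivSqZeroExt K (ℕ → K)))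
  letI : Module K Y := Module.compHom Y (algebraMap K (TrivSqZeroExt K (ℕ → K)))
  set fK : X →ₗ[K] Y :=
    { toFun := f
      map_add' := f.map_add
      map_smul' := fun k x => f.map_smul (algebraMap K (TrivSqZeroExt K (ℕ → K)) k) x } with hfK
  have hker : LinearMap.ker fK = ⊥ := by
    rw [LinearMap.ker_eq_bot]
    exact hf
  obtain ⟨finv, hfinv⟩ := fK.exists_leftInverse_of_injective hker
  set gh : X →ₗ[K] K :=
    { toFun := fun x => (g x).app 1
      map_add' := fun x y => by
        show (g (x + y)).app 1 = (g x).app 1 + (g y).app 1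
        rw [g.map_add]; exact MDual.app_add _ _ _
      map_smul' := fun k x => by
        have h1 : g ((algebraMap K (TrivSqZeroExt K (ℕ → K)) k) • x)
            = (algebraMap K (TrivSqZeroExt K (ℕ → K)) k) • g x := g.map_smul _ x
        show (g ((algebraMap K (TrivSqZeroExt K (ℕ → K)) k) • x)).app 1 = k • (g x).app 1
        rw [h1, MDual.smul_app, mul_one, algebraMap_eq_inl', Algebra.algebraMap_self,
          RingHom.id_apply, inl_eq_smul_one, MDual.app_smul, smul_eq_mul] } with hgh
  set hh : Y →ₗ[K] K := gh.comp finv with hhh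
  let hfun : Y → MDual K := fun y => MDual.mk K
    { toFun := fun r => hh (r • y)
      map_add' := fun r r' => by
        show hh ((r + r') • y) = hh (r • y) + hh (r' • y)
        rw [add_smul]; exact hh.map_add _ _
      map_smul' := fun k r => by
        show hh ((k • r) • y) = k • hh (r • y)
        have e2 : (k • r) = (inl k : TrivSqZeroExt K (ℕ → K)) * r := by
          ext
          · rw [fst_smul, fst_mul, fst_inl, smul_eq_mul]
          · rw [snd_smul, snd_mul, fst_inl, snd_inl]; simp
        have e1 : (k • r) • y = k • (r • y) := by
          show (k • r) • y = (algebraMap K (TrivSqZeroExt K (ℕ → K)) k) • (r • y)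
          rw [show (algebraMap K (TrivSqZeroExt K (ℕ → K))) k = inl k from
            congrFun (algebraMap_eq_inl K (ℕ → K)) k, e2, mul_smul]
        rw [e1]
        exact hh.map_smul k (r • y) }
  have hfun_app : ∀ y r, (hfun y).app r = hh (r • y) := fun y r => rfl
  refine ⟨{ toFun := hfun
            map_add' := fun y y' => MDual.ext fun r => by
              rw [MDual.app_add, hfun_app, hfun_app, hfun_app]
              have e1 : r • (y + y') = r • y + r • y' := smul_add r y y'
              rw [e1]
              exact hh.map_add _ _
            map_smul' := fun s y => MDual.ext fun r => by
              rw [RingHom.id_apply, MDual.smul_app, hfun_app, hfun_app, ← mul_smul, mul_smul,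
                smul_comm]
              rw [← mul_smul, mul_comm, mul_smul] }, ?_⟩
  intro x
  refine MDual.ext fun r => ?_
  show (hfun (f x)).app r = (g x).app r
  rw [hfun_app]
  have h1 : r • f x = fK (r • x) := (f.map_smul r x).symm
  rw [h1]
  show gh (finv (fK (r • x))) = (g x).app r
  have h2 : finv (fK (r • x)) = r • x := by
    have := LinearMap.congr_fun hfinv (r • x)
    simpa using this
  rw [h2]
  show (g (r • x)).app 1 = (g x).app r
  rw [g.map_smul, MDual.smul_app, mul_one]

variable (K) in
def KF : Type u := K

instance : AddCommGroup (KF K) := inferInstanceAs (AddCommGroup K)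

instance : Module (TrivSqZeroExt K (ℕ → K)) (KF K) :=
  Module.compHom K (fstHom K K (ℕ → K)).toRingHom

lemma KF.smul_def (r : TrivSqZeroExt K (ℕ → K)) (k : KF K) :
    r • k = (r.fst * (show K from k) : K) := rfl

lemma mul_inr' (r : TrivSqZeroExt K (ℕ → K)) (m : ℕ → K) :
    r * inr m = inr (r.fst • m) := by
  ext
  · rw [fst_mul, fst_inr, mul_zero, fst_inr]
  · rw [snd_mul, fst_inr, snd_inr, snd_inr, MulOpposite.op_zero, zero_smul, add_zero]

lemma inr_smul' (k : K) (m : ℕ → K) :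
    (inr (k • m) : TrivSqZeroExt K (ℕ → K)) = k • inr m := by
  ext
  · rw [fst_inr, fst_smul, fst_inr, smul_zero]
  · rw [snd_inr, snd_smul, snd_inr]

lemma fst_of_mem_span {y : TrivSqZeroExt K (ℕ → K)}
    (hy : y ∈ Ideal.span {(inr (fun _ => 1) : TrivSqZeroExt K (ℕ → K))}) : y.fst = 0 := by
  obtain ⟨a, rfl⟩ := Ideal.mem_span_singleton'.mp hy
  rw [fst_mul, fst_inr, mul_zero]

lemma MDual.app_zero (x : TrivSqZeroExt K (ℕ → K)) : (0 : MDual K).app x = 0 := rfl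

/-- the element of `V` we evaluate against -/
def ee : ℕ → K := Pi.single 0 1

set_option maxHeartbeats 1000000 in
set_option synthInstance.maxHeartbeats 100000 in
/-- the "evaluation against `Pi.single 0 1`" pairing -/
def innerMap (x : (Ideal.span {(inr (fun _ => 1) : TrivSqZeroExt K (ℕ → K))} :
    Ideal (TrivSqZeroExt K (ℕ → K)))) : MDual K →ₗ[TrivSqZeroExt K (ℕ → K)] KF K where
  toFun f := f.app (inr ((x : TrivSqZeroExt K (ℕ → K)).snd 0 • ee))
  map_add' f f' := MDual.app_add f f' _
  map_smul' r f := by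
    set c := (x : TrivSqZeroExt K (ℕ → K)).snd 0
    show (r • f).app (inr (c • ee)) =
      r • (show KF K from f.app (inr (c • ee)))
    rw [MDual.smul_app, KF.smul_def, mul_inr', inr_smul', MDual.app_smul]

lemma innerMap_apply (x) (f : MDual K) :
    innerMap x f = f.app (inr ((x : TrivSqZeroExt K (ℕ → K)).snd 0 • ee)) := rfl

set_option maxHeartbeats 1000000 in
set_option synthInstance.maxHeartbeats 100000 in
def betaMap : (Ideal.span {(inr (fun _ => 1) : TrivSqZeroExt K (ℕ → K))} :
    Ideal (TrivSqZeroExt K (ℕ → K))) →ₗ[TrivSqZeroExt K (ℕ → K)]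
    (MDual K →ₗ[TrivSqZeroExt K (ℕ → K)] KF K) where
  toFun := innerMap
  map_add' x y := LinearMap.ext fun f => by
    show innerMap (x + y) f = innerMap x f + innerMap y f
    rw [innerMap_apply, innerMap_apply, innerMap_apply, Submodule.coe_add, snd_add,
      Pi.add_apply, add_smul, inr_add, MDual.add_app]
    rfl
  map_smul' r x := LinearMap.ext fun f => by
    show innerMap (r • x) f = r • (show KF K from innerMap x f)
    rw [innerMap_apply, innerMap_apply, Submodule.coe_smul, smul_eq_mul, snd_mul,
      fst_of_mem_span x.2, MulOpposite.op_zero, zero_smul, add_zero, Pi.smul_apply,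
      smul_eq_mul, mul_smul, inr_smul', MDual.app_smul, KF.smul_def]


set_option maxHeartbeats 1000000 in
set_option synthInstance.maxHeartbeats 100000 in
theorem mdual_not_flat : ¬ Module.Flat (TrivSqZeroExt K (ℕ → K)) (MDual K) := by
  intro hflat
  set I : Ideal (TrivSqZeroExt K (ℕ → K)) :=
    Ideal.span {(inr (fun _ => 1) : TrivSqZeroExt K (ℕ → K))} with hI
  have hinj := (Module.Flat.iff_rTensor_injective' (R := TrivSqZeroExt K (ℕ → K)) (M := MDual K)).mp hflat I
  -- the functional `x ↦ x.snd 0 - x.snd 1`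
  set f0 : MDual K := MDual.mk K
    { toFun := fun x => x.snd 0 - x.snd 1
      map_add' := fun x y => by
        show (x + y).snd 0 - (x + y).snd 1 = (x.snd 0 - x.snd 1) + (y.snd 0 - y.snd 1)
        rw [snd_add]
        simp only [Pi.add_apply]
        ring
      map_smul' := fun k x => by
        show (k • x).snd 0 - (k • x).snd 1 = k • (x.snd 0 - x.snd 1)
        rw [snd_smul]
        simp only [Pi.smul_apply, smul_eq_mul]
        ring } with hf0
  have hf0app : ∀ x : TrivSqZeroExt K (ℕ → K), f0.app x = x.snd 0 - x.snd 1 := fun _ => rfl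
  have hgf0 : (inr (fun _ => 1) : TrivSqZeroExt K (ℕ → K)) • f0 = 0 := by
    refine MDual.ext fun x => ?_
    rw [MDual.smul_app, MDual.app_zero, mul_comm, mul_inr', hf0app]
    show (x.fst • (fun _ => (1:K))) 0 - (x.fst • (fun _ => (1:K))) 1 = 0
    simp
  set z : TensorProduct (TrivSqZeroExt K (ℕ → K)) I (MDual K) :=
    (⟨inr (fun _ => 1), Ideal.mem_span_singleton_self _⟩ : I)
      ⊗ₜ[TrivSqZeroExt K (ℕ → K)] f0 with hz
  have h1 : LinearMap.rTensor (MDual K) I.subtype z = 0 := by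
    rw [hz, LinearMap.rTensor_tmul]
    show (inr (fun _ => 1) : TrivSqZeroExt K (ℕ → K)) ⊗ₜ[TrivSqZeroExt K (ℕ → K)] f0 = 0
    calc (inr (fun _ => 1) : TrivSqZeroExt K (ℕ → K)) ⊗ₜ[TrivSqZeroExt K (ℕ → K)] f0
        = ((inr (fun _ => 1) : TrivSqZeroExt K (ℕ → K)) • (1 : TrivSqZeroExt K (ℕ → K)))
          ⊗ₜ[TrivSqZeroExt K (ℕ → K)] f0 := by rw [smul_eq_mul, mul_one]
      _ = (1 : TrivSqZeroExt K (ℕ → K)) ⊗ₜ[TrivSqZeroExt K (ℕ → K)]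
          ((inr (fun _ => 1) : TrivSqZeroExt K (ℕ → K)) • f0) := by
            exact TensorProduct.smul_tmul ((inr (fun _ => 1) : TrivSqZeroExt K (ℕ → K)))
              (1 : TrivSqZeroExt K (ℕ → K)) f0
      _ = 0 := by rw [hgf0, TensorProduct.tmul_zero]
  have h2 : z = 0 := hinj (by rw [h1, map_zero])
  have h3 : TensorProduct.lift betaMap z = (show KF K from (1 : K)) := by
    rw [hz, TensorProduct.lift.tmul]
    show innerMap _ f0 = (show KF K from (1 : K))
    rw [innerMap_apply, hf0app, snd_inr]
    show ((1 : K) • (ee : ℕ → K)) 0 - ((1 : K) • (ee : ℕ → K)) 1 = 1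
    rw [one_smul]
    show (Pi.single 0 1 : ℕ → K) 0 - (Pi.single 0 1 : ℕ → K) 1 = 1
    simp
  rw [h2, map_zero] at h3
  exact zero_ne_one (show (0 : K) = 1 from h3)

end RingAux

/-- Let `K` be a field, `V = ∏_{i=1}^∞ K` and `R = K(+)V` the
idealization. Then `R` is a φ-ring and a φ-IF ring; for the all-ones vector `v`, the
annihilator `(0 :_R (0,v))` equals `0(+)V` and is not finitely generated; `R` is not
coherent; and `R` is not an IF ring. -/
theorem idealization_field_product_phiIF_not_IF (K : Type u) [Field K] :
    IsPhiRing (TrivSqZeroExt K (ℕ → K)) ∧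
      (∀ (M : Type u) [AddCommGroup M] [Module (TrivSqZeroExt K (ℕ → K)) M],
        IsNonnilInjective (TrivSqZeroExt K (ℕ → K)) M →
          IsPhiFlat (TrivSqZeroExt K (ℕ → K)) M) ∧
      ((Submodule.colon (⊥ : Ideal (TrivSqZeroExt K (ℕ → K)))
            (Ideal.span {(TrivSqZeroExt.inr (fun _ => 1) : TrivSqZeroExt K (ℕ → K))}) :
          Set (TrivSqZeroExt K (ℕ → K))) =
        {x : TrivSqZeroExt K (ℕ → K) | x.fst = 0} ∧
        ¬ (Submodule.colon (⊥ : Ideal (TrivSqZeroExt K (ℕ → K)))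
            (Ideal.span
              {(TrivSqZeroExt.inr (fun _ => 1) : TrivSqZeroExt K (ℕ → K))})).FG) ∧
      ¬ IsCoherentRing (TrivSqZeroExt K (ℕ → K)) ∧
      ¬ (∀ (M : Type u) [AddCommGroup M] [Module (TrivSqZeroExt K (ℕ → K)) M],
          Module.Injective (TrivSqZeroExt K (ℕ → K)) M →
            Module.Flat (TrivSqZeroExt K (ℕ → K)) M) := by
  
  classical
  refine ⟨phiRing, ?_, ⟨colon_eq, colon_not_fg⟩, not_coherent, ?_⟩
  · intro M _ _ _ T _ _ hT
    haveI : Subsingleton T := by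
      constructor
      suffices h : ∀ t : T, t = 0 by intro a b; rw [h a, h b]
      intro t
      obtain ⟨I, hI, h⟩ := hT t
      obtain ⟨x, hxI, hx⟩ := SetLike.not_le_iff_exists.mp hI
      have hu : IsUnit x := by
        rw [TrivSqZeroExt.isUnit_iff_isUnit_fst, isUnit_iff_ne_zero]
        intro h0
        exact hx ((mem_nil_iff x).mpr h0)
      obtain ⟨u, rfl⟩ := hu
      have h1 := h _ hxI
      calc t = ((↑u⁻¹ * ↑u : TrivSqZeroExt K (ℕ → K))) • t := by
              rw [Units.inv_mul, one_smul]
        _ = (↑u⁻¹ : TrivSqZeroExt K (ℕ → K)) • ((↑u : TrivSqZeroExt K (ℕ → K)) • t) :=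
              mul_smul _ _ _
        _ = 0 := by rw [h1, smul_zero]
    exact tor_subsingleton T M
  · intro h
    exact mdual_not_flat (h (MDual K) mdual_injective)
end
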